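/- arXiv:2404.09605 — 7 statements merged into one kernel-verified Lean document; each statement's English description precedes it below -/
import Mathlib

section
/- Let Z₁, …, Zₙ be i.i.d. real random variables with mean μ, variance σ² > 0, and finite absolute third central moment ρ = 𝔼|Z₁ − μ|³. Then for every x ∈ ℝ and every n ≥ 1, 𝔼[exp(−∑ᵢ Zᵢ) · 1{∑ᵢ Zᵢ ≥ x}] ≤ (1/√(2π) + ρ/σ²) · e^{−x} / (σ√n). -/
open MeasureTheory Real Set
set_option maxHeartbeats 2000000

noncomputable def stdNormalCDF (x : ℝ) : ℝ :=
  ∫ t in Set.Iic x, Real.exp (-t^2/2) / Real.sqrt (2*Real.pi)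

lemma gauss_integrable : Integrable (fun t : ℝ => Real.exp (-t^2/2) / Real.sqrt (2*Real.pi)) := by
  have h : Integrable (fun t : ℝ => Real.exp (-(1/2 : ℝ) * t^2)) :=
    integrable_exp_neg_mul_sq (by norm_num)
  have h2 := h.div_const (Real.sqrt (2*Real.pi))
  convert h2 using 2 with t
  ring_nf

lemma stdNormalCDF_lipschitz {u v : ℝ} (h : u ≤ v) :
    stdNormalCDF v - stdNormalCDF u ≤ (v - u) / Real.sqrt (2*Real.pi) := by
  have hπ : 0 < Real.sqrt (2*Real.pi) := Real.sqrt_pos.2 (by positivity)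
  have hsplit : stdNormalCDF v = stdNormalCDF u
      + ∫ t in Ioc u v, Real.exp (-t^2/2) / Real.sqrt (2*Real.pi) := by
    rw [stdNormalCDF, stdNormalCDF, ← Set.Iic_union_Ioc_eq_Iic h,
      setIntegral_union (Set.Iic_disjoint_Ioc le_rfl) measurableSet_Ioc
        gauss_integrable.integrableOn gauss_integrable.integrableOn]
  have hbound : (∫ t in Ioc u v, Real.exp (-t^2/2) / Real.sqrt (2*Real.pi))
      ≤ ∫ _t in Ioc u v, 1 / Real.sqrt (2*Real.pi) := by
    refine setIntegral_mono_on gauss_integrable.integrableOn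
      (integrableOn_const measure_Ioc_lt_top.ne) measurableSet_Ioc fun t _ => ?_
    gcongr
    exact Real.exp_le_one_iff.2 (by nlinarith [sq_nonneg t])
  have hconst : (∫ _t in Ioc u v, 1 / Real.sqrt (2*Real.pi)) = (v - u) / Real.sqrt (2*Real.pi) := by
    rw [setIntegral_const, Real.volume_real_Ioc_of_le h]
    rw [smul_eq_mul]; ring
  rw [hsplit]
  linarith

theorem exp_tail_berry_esseen (μ : Measure ℝ) [IsProbabilityMeasure μ]
    (m σ ρ : ℝ) (hσ : 0 < σ)
    (hm : ∫ z, z ∂μ = m) (hvar : ∫ z, (z - m)^2 ∂μ = σ^2)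
    (hρ : ∫ z, |z - m|^3 ∂μ = ρ)
    (hρfin : Integrable (fun z => |z - m|^3) μ)
    (hBE : ∀ (n : ℕ), 1 ≤ n → ∀ x : ℝ,
      |((Measure.pi (fun _ : Fin n => μ))
          {y | ((∑ i, y i) - n*m)/(σ*Real.sqrt n) ≤ x}).toReal - stdNormalCDF x|
        ≤ ρ/(2*σ^3*Real.sqrt n))
    (n : ℕ) (hn : 1 ≤ n) (x : ℝ) :
    (∫ y in {y : Fin n → ℝ | x ≤ ∑ i, y i}, Real.exp (-(∑ i, y i))
        ∂(Measure.pi fun _ : Fin n => μ))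
      ≤ (1/Real.sqrt (2*Real.pi) + ρ/σ^2) * Real.exp (-x) / (σ * Real.sqrt n) := by
  have hπ : 0 < Real.sqrt (2*Real.pi) := Real.sqrt_pos.2 (by positivity)
  set c := Real.sqrt (2*Real.pi) with hc
  have hn0 : (0:ℝ) < Real.sqrt n := Real.sqrt_pos.2 (by exact_mod_cast hn)
  set a := σ * Real.sqrt n with ha
  have hapos : 0 < a := mul_pos hσ hn0
  set ν := Measure.pi (fun _ : Fin n => μ) with hν
  have hS : Measurable (fun y : Fin n → ℝ => ∑ i, y i) :=
    Finset.measurable_sum _ fun i _ => measurable_pi_apply i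
  set κ := ν.map (fun y : Fin n → ℝ => ∑ i, y i) with hκ
  haveI : IsProbabilityMeasure κ := Measure.isProbabilityMeasure_map hS.aemeasurable
  have hρ0 : 0 ≤ ρ := hρ ▸ integral_nonneg (fun z => by positivity)
  set B := ρ/(2*σ^3*Real.sqrt n) with hB
  have hB0 : 0 ≤ B := by positivity
  -- CDF bound
  have hF : ∀ t : ℝ, |(κ (Iic t)).toReal - stdNormalCDF ((t - n*m)/a)| ≤ B := by
    intro t
    have h1 := hBE n hn ((t - n*m)/a)
    have hset : {y : Fin n → ℝ | ((∑ i, y i) - n*m)/a ≤ (t - n*m)/a}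
        = (fun y : Fin n → ℝ => ∑ i, y i) ⁻¹' (Iic t) := by
      ext y
      simp only [mem_setOf_eq, mem_preimage, mem_Iic]
      rw [div_le_div_iff_of_pos_right hapos, sub_le_sub_iff_right]
    rw [hκ, Measure.map_apply hS measurableSet_Iic, ← hset]
    exact h1
  -- Ioc bound
  have hIoc : ∀ u t : ℝ, u ≤ t → (κ (Ioc u t)).toReal ≤ (t - u)/(a*c) + 2*B := by
    intro u t hut
    have hdiff : κ (Ioc u t) = κ (Iic t) - κ (Iic u) := by
      rw [← Set.Iic_sdiff_Iic,
        measure_diff (Iic_subset_Iic.2 hut) measurableSet_Iic.nullMeasurableSet (measure_ne_top κ _)]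
    have h2 : (κ (Ioc u t)).toReal = (κ (Iic t)).toReal - (κ (Iic u)).toReal := by
      rw [hdiff, ENNReal.toReal_sub_of_le (measure_mono (Iic_subset_Iic.2 hut)) (measure_ne_top _ _)]
    have h3 := abs_le.1 (hF t)
    have h4 := abs_le.1 (hF u)
    have hΦ := stdNormalCDF_lipschitz
      (u := (u - n*m)/a) (v := (t - n*m)/a) (by gcongr)
    have he : ((t - n*m)/a - (u - n*m)/a) = (t - u)/a := by ring
    rw [he] at hΦ
    have he2 : (t - u)/a/c = (t - u)/(a*c) := by rw [div_div]
    rw [he2] at hΦ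
    rw [h2]
    linarith [h3.1, h3.2, h4.1, h4.2]
  -- reduce LHS to a lintegral over κ
  have hLHS : (∫ y in {y : Fin n → ℝ | x ≤ ∑ i, y i}, Real.exp (-(∑ i, y i)) ∂ν)
      = (∫⁻ s in Ici x, ENNReal.ofReal (Real.exp (-s)) ∂κ).toReal := by
    have h1 : (∫ y in {y : Fin n → ℝ | x ≤ ∑ i, y i}, Real.exp (-(∑ i, y i)) ∂ν)
        = ∫ s in Ici x, Real.exp (-s) ∂κ := by
      have hg : AEStronglyMeasurable (fun s : ℝ => Real.exp (-s))
          (Measure.map (fun y : Fin n → ℝ => ∑ i, y i) ν) :=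
        Continuous.aestronglyMeasurable (by continuity)
      rw [hκ, setIntegral_map measurableSet_Ici hg hS.aemeasurable]
      rfl
    have hg2 : AEStronglyMeasurable (fun s : ℝ => Real.exp (-s)) (κ.restrict (Ici x)) :=
      Continuous.aestronglyMeasurable (by continuity)
    rw [h1, integral_eq_lintegral_of_nonneg_ae (ae_of_all _ fun s => (Real.exp_pos _).le) hg2]
  rw [hLHS]
  set L := ∫⁻ s in Ici x, ENNReal.ofReal (Real.exp (-s)) ∂κ with hL
  -- exp integral facts
  have hexp_int : ∀ s : ℝ, IntegrableOn (fun t => Real.exp (-t)) (Ioi s) := by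
    intro s
    have h := exp_neg_integrableOn_Ioi s (zero_lt_one)
    simpa using h
  have hA : ∀ s : ℝ, (∫⁻ t in Ioi s, ENNReal.ofReal (Real.exp (-t)))
      = ENNReal.ofReal (Real.exp (-s)) := by
    intro s
    rw [← ofReal_integral_eq_lintegral_ofReal (hexp_int s)
      (ae_of_all _ fun t => (Real.exp_pos _).le), integral_exp_neg_Ioi]
  -- Fubini swap
  set T : Set (ℝ × ℝ) := {p | x ≤ p.1 ∧ p.1 < p.2} with hT
  have hTm : MeasurableSet T :=
    (measurableSet_le measurable_const measurable_fst).inter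
      (measurableSet_lt measurable_fst measurable_snd)
  set f : ℝ × ℝ → ENNReal :=
    fun p => T.indicator (fun q => ENNReal.ofReal (Real.exp (-q.2))) p with hf
  have hfm : Measurable f :=
    ((ENNReal.measurable_ofReal.comp (Real.measurable_exp.comp measurable_neg)).comp
      measurable_snd).indicator hTm
  have hswap : L = ∫⁻ t, ∫⁻ s, f (s, t) ∂κ ∂(volume : Measure ℝ) := by
    have h1 : ∀ s : ℝ, (∫⁻ t, f (s, t)) =
        (Ici x).indicator (fun s => ENNReal.ofReal (Real.exp (-s))) s := by
      intro s
      by_cases hs : x ≤ s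
      · have h2 : ∀ t, f (s, t) = (Ioi s).indicator (fun t => ENNReal.ofReal (Real.exp (-t))) t := by
          intro t
          by_cases hts : s < t
          · simp [hf, hT, Set.indicator, hs, hts]
          · simp [hf, hT, Set.indicator, hs, hts]
        rw [lintegral_congr h2, lintegral_indicator measurableSet_Ioi _, hA s,
          Set.indicator_of_mem (mem_Ici.mpr hs)]
      · have h2 : ∀ t, f (s, t) = 0 := by
          intro t; simp [hf, hT, Set.indicator, hs]
        rw [lintegral_congr h2, lintegral_zero,
          Set.indicator_of_notMem (fun hmem => hs (mem_Ici.mp hmem))]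
    have h3 : L = ∫⁻ s, ∫⁻ t, f (s, t) ∂(volume : Measure ℝ) ∂κ := by
      rw [hL, ← lintegral_indicator measurableSet_Ici]
      exact lintegral_congr fun s => (h1 s).symm
    rw [h3]
    exact lintegral_lintegral_swap hfm.aemeasurable
  have hC : ∀ t : ℝ, (∫⁻ s, f (s, t) ∂κ) = ENNReal.ofReal (Real.exp (-t)) * κ (Ico x t) := by
    intro t
    have h2 : ∀ s, f (s, t) = (Ico x t).indicator (fun _ => ENNReal.ofReal (Real.exp (-t))) s := by
      intro s
      by_cases h1 : x ≤ s ∧ s < t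
      · simp [hf, hT, Set.indicator, h1.1, h1.2, Set.mem_Ico]
      · have h1' : ¬ (s ∈ Ico x t) := by simpa [Set.mem_Ico] using h1
        have h1'' : ¬ ((s, t) ∈ T) := by simpa [hT] using h1
        simp only [hf]
        rw [Set.indicator_of_notMem h1'', Set.indicator_of_notMem h1']
    rw [lintegral_congr h2, lintegral_indicator measurableSet_Ico _, setLIntegral_const]
  -- derivative computations for the real integral
  have hgderiv : ∀ t : ℝ, HasDerivAt (fun t => -(t - x + 1) * Real.exp (-t))
      (Real.exp (-t) * (t - x)) t := by
    intro t
    have h1 : HasDerivAt (fun t : ℝ => -(t - x + 1)) (-1) t := by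
      exact (((hasDerivAt_id' t).sub_const x).add_const 1).neg
    have h2 : HasDerivAt (fun t : ℝ => Real.exp (-t)) (-Real.exp (-t)) t := by
      simpa using (hasDerivAt_neg t).exp
    have h3 := h1.mul h2
    refine h3.congr_deriv ?_
    ring
  have hgtend : Filter.Tendsto (fun t : ℝ => -(t - x + 1) * Real.exp (-t))
      Filter.atTop (nhds 0) := by
    have h1 : Filter.Tendsto (fun t : ℝ => t * Real.exp (-t)) Filter.atTop (nhds 0) := by
      simpa using Real.tendsto_pow_mul_exp_neg_atTop_nhds_zero 1
    have h2 := Real.tendsto_exp_neg_atTop_nhds_zero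
    have h3 := (h1.neg).add (h2.const_mul (x - 1))
    simp only [neg_zero, mul_zero, add_zero, zero_add] at h3
    refine h3.congr fun t => ?_
    ring
  have hI1int : IntegrableOn (fun t => Real.exp (-t) * (t - x)) (Ioi x) :=
    integrableOn_Ioi_deriv_of_nonneg' (fun t _ => hgderiv t)
      (fun t ht => mul_nonneg (Real.exp_pos _).le (by simp only [mem_Ioi] at ht; linarith)) hgtend
  have hI1val : ∫ t in Ioi x, Real.exp (-t) * (t - x) = Real.exp (-x) := by
    rw [integral_Ioi_of_hasDerivAt_of_nonneg' (fun t _ => hgderiv t)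
      (fun t ht => mul_nonneg (Real.exp_pos _).le (by simp only [mem_Ioi] at ht; linarith)) hgtend]
    ring
  -- epsilon bound
  have hεbound : ∀ ε : ℝ, 0 < ε → L.toReal ≤ (1/c + ρ/σ^2) * Real.exp (-x) / a
      + ε * (Real.exp (-x)/(a*c)) := by
    intro ε hε
    set D : ℝ → ℝ := fun t => (t - x + ε)/(a*c) + 2*B with hD
    have hDnn : ∀ t : ℝ, x < t → 0 ≤ D t := by
      intro t ht
      have h1 : (0:ℝ) ≤ (t - x + ε)/(a*c) := div_nonneg (by linarith) (by positivity)
      simp only [hD]; linarith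
    have hDκ : ∀ t : ℝ, ENNReal.ofReal (Real.exp (-t)) * κ (Ico x t)
        ≤ (Ioi x).indicator (fun t => ENNReal.ofReal (Real.exp (-t) * D t)) t := by
      intro t
      by_cases ht : x < t
      · rw [Set.indicator_of_mem (mem_Ioi.mpr ht)]
        have hκle : κ (Ico x t) ≤ ENNReal.ofReal (D t) := by
          have hsub : Ico x t ⊆ Ioc (x - ε) t := fun s hs => ⟨by linarith [hs.1], hs.2.le⟩
          refine le_trans (measure_mono hsub) ?_
          rw [ENNReal.le_ofReal_iff_toReal_le (measure_ne_top _ _) (hDnn t ht)]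
          have h2 := hIoc (x - ε) t (by linarith)
          have he : t - (x - ε) = t - x + ε := by ring
          rw [he] at h2
          exact h2
        calc ENNReal.ofReal (Real.exp (-t)) * κ (Ico x t)
            ≤ ENNReal.ofReal (Real.exp (-t)) * ENNReal.ofReal (D t) := by gcongr
          _ = ENNReal.ofReal (Real.exp (-t) * D t) :=
              (ENNReal.ofReal_mul (Real.exp_pos _).le).symm
      · have hempty : Ico x t = ∅ := Ico_eq_empty ht
        rw [hempty, measure_empty, mul_zero, Set.indicator_of_notMem (by simpa using ht)]
    have hL2 : L ≤ ∫⁻ t in Ioi x, ENNReal.ofReal (Real.exp (-t) * D t) := by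
      rw [hswap]
      calc (∫⁻ t, ∫⁻ s, f (s, t) ∂κ ∂(volume : Measure ℝ))
          = ∫⁻ t, ENNReal.ofReal (Real.exp (-t)) * κ (Ico x t) := lintegral_congr hC
        _ ≤ ∫⁻ t, (Ioi x).indicator (fun t => ENNReal.ofReal (Real.exp (-t) * D t)) t :=
            lintegral_mono hDκ
        _ = ∫⁻ t in Ioi x, ENNReal.ofReal (Real.exp (-t) * D t) :=
            lintegral_indicator measurableSet_Ioi _
    have heq : ∀ t : ℝ, Real.exp (-t) * D t =
        (1/(a*c)) * (Real.exp (-t) * (t - x)) + (ε/(a*c) + 2*B) * Real.exp (-t) := by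
      intro t
      simp only [hD]
      field_simp
      ring
    have hint : IntegrableOn (fun t => Real.exp (-t) * D t) (Ioi x) := by
      exact IntegrableOn.congr_fun ((hI1int.const_mul (1/(a*c))).add
        ((hexp_int x).const_mul (ε/(a*c) + 2*B))) (fun t _ => (heq t).symm) measurableSet_Ioi
    have hval : ∫ t in Ioi x, Real.exp (-t) * D t
        = Real.exp (-x) * ((1 + ε)/(a*c) + 2*B) := by
      rw [show (fun t => Real.exp (-t) * D t) = fun t =>
          (1/(a*c)) * (Real.exp (-t) * (t - x)) + (ε/(a*c) + 2*B) * Real.exp (-t)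
        from funext heq]
      rw [integral_add (hI1int.const_mul _) ((hexp_int x).const_mul _),
        integral_const_mul, integral_const_mul, hI1val, integral_exp_neg_Ioi]
      field_simp
      ring
    have hnn : 0 ≤ᵐ[volume.restrict (Ioi x)] fun t => Real.exp (-t) * D t :=
      (ae_restrict_mem measurableSet_Ioi).mono fun t ht =>
        mul_nonneg (Real.exp_pos _).le (hDnn t (mem_Ioi.mp ht))
    have hL3 : L ≤ ENNReal.ofReal (Real.exp (-x) * ((1 + ε)/(a*c) + 2*B)) := by
      refine hL2.trans (le_of_eq ?_)
      rw [← ofReal_integral_eq_lintegral_ofReal hint hnn, hval]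
    have hfin : L.toReal ≤ Real.exp (-x) * ((1 + ε)/(a*c) + 2*B) := by
      refine ENNReal.toReal_le_of_le_ofReal ?_ hL3
      have h1 : (0:ℝ) ≤ (1 + ε)/(a*c) := div_nonneg (by linarith) (by positivity)
      have h2 : (0:ℝ) ≤ Real.exp (-x) := (Real.exp_pos _).le
      nlinarith
    refine hfin.trans (le_of_eq ?_)
    rw [hB, ha, hc]
    have hσ' : σ ≠ 0 := ne_of_gt hσ
    have hn' : Real.sqrt n ≠ 0 := ne_of_gt hn0
    have hc' : Real.sqrt (2*Real.pi) ≠ 0 := ne_of_gt hπ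
    field_simp
    ring
  -- conclude
  have hKpos : 0 < Real.exp (-x)/(a*c) := by positivity
  refine le_of_forall_pos_le_add fun δ hδ => ?_
  have h := hεbound (δ / (Real.exp (-x)/(a*c))) (by positivity)
  rwa [div_mul_cancel₀ _ (ne_of_gt hKpos)] at h
end

section
/- Let P, Q be probability measures on (A, 𝒜) with densities p, q with respect to a σ-finite measure λ, and suppose D(P‖Q) and D(Q‖P) are both finite. Then the function Z(α) = ∫ p^α q^{1−α} dλ is continuously differentiable on (0,1) with Z′(α) = ∫ p^α q^{1−α} log(p/q) dλ. -/
open MeasureTheory Real Set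

private lemma core_bound {t c δ : ℝ} (ht : 1 ≤ t) (hδ : 0 < δ) (_hc0 : 0 ≤ c)
    (hc : c ≤ 1 - δ) : t ^ c * Real.log t ≤ t / δ := by
  have ht0 : 0 < t := lt_of_lt_of_le one_pos ht
  have hlog : Real.log t ≤ t ^ δ / δ := by
    have h1 : Real.log (t ^ δ) = δ * Real.log t := Real.log_rpow ht0 δ
    have h2 : Real.log (t ^ δ) ≤ t ^ δ - 1 :=
      Real.log_le_sub_one_of_pos (Real.rpow_pos_of_pos ht0 δ)
    have h3 : δ * Real.log t ≤ t ^ δ := by linarith [h1 ▸ h2]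
    rw [le_div_iff₀ hδ]
    linarith [h3]
  have hmono : t ^ c ≤ t ^ (1 - δ) := Real.rpow_le_rpow_of_exponent_le ht hc
  have hlog0 : 0 ≤ Real.log t := Real.log_nonneg ht
  have h4 : t ^ c * Real.log t ≤ t ^ (1 - δ) * (t ^ δ / δ) := by
    apply mul_le_mul hmono hlog hlog0 (Real.rpow_nonneg ht0.le _)
  calc t ^ c * Real.log t ≤ t ^ (1 - δ) * (t ^ δ / δ) := h4
    _ = t ^ ((1 - δ) + δ) / δ := by rw [Real.rpow_add ht0]; ring
    _ = t / δ := by norm_num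

private lemma half_bound {p q a δ : ℝ} (hq : 0 < q) (hpq : q ≤ p) (hδ : 0 < δ)
    (ha0 : 0 ≤ a) (ha2 : a ≤ 1 - δ) :
    p ^ a * q ^ (1 - a) * Real.log (p / q) ≤ p / δ := by
  have hp : 0 < p := lt_of_lt_of_le hq hpq
  have ht : 1 ≤ p / q := (one_le_div hq).2 hpq
  have key := core_bound ht hδ ha0 ha2
  have heq : p ^ a * q ^ (1 - a) = q * (p / q) ^ a := by
    rw [Real.div_rpow hp.le hq.le, Real.rpow_sub hq, Real.rpow_one]
    field_simp
  rw [heq, mul_assoc]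
  calc q * ((p / q) ^ a * Real.log (p / q)) ≤ q * ((p / q) / δ) :=
        mul_le_mul_of_nonneg_left key hq.le
    _ = p / δ := by field_simp

private lemma key_bound {p q a δ : ℝ} (hp : 0 ≤ p) (hq : 0 ≤ q) (hδ : 0 < δ)
    (ha1 : δ ≤ a) (ha2 : a ≤ 1 - δ) :
    |p ^ a * q ^ (1 - a) * Real.log (p / q)| ≤ (p + q) / δ := by
  have ha0 : 0 < a := lt_of_lt_of_le hδ ha1
  have ha0' : 0 < 1 - a := lt_of_lt_of_le hδ (by linarith)
  rcases hp.eq_or_lt with hp0 | hp0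
  · rw [← hp0, Real.zero_rpow (ne_of_gt ha0)]
    simp only [zero_mul, abs_zero]
    positivity
  rcases hq.eq_or_lt with hq0 | hq0
  · rw [← hq0, Real.zero_rpow (ne_of_gt ha0')]
    simp only [mul_zero, zero_mul, abs_zero]
    positivity
  rcases le_total q p with hpq | hpq
  · have hlog : 0 ≤ Real.log (p / q) := Real.log_nonneg ((one_le_div hq0).2 hpq)
    rw [abs_of_nonneg (by positivity)]
    calc p ^ a * q ^ (1 - a) * Real.log (p / q) ≤ p / δ :=
          half_bound hq0 hpq hδ ha0.le ha2
      _ ≤ (p + q) / δ := by gcongr; linarith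
  · have hlog : Real.log (p / q) ≤ 0 :=
      Real.log_nonpos (by positivity) ((div_le_one hq0).2 hpq)
    rw [abs_of_nonpos (mul_nonpos_of_nonneg_of_nonpos (by positivity) hlog)]
    have hkey := half_bound hp0 hpq hδ ha0'.le (by linarith)
    have hlogeq : Real.log (q / p) = -Real.log (p / q) := by
      rw [Real.log_div (ne_of_gt hq0) (ne_of_gt hp0),
        Real.log_div (ne_of_gt hp0) (ne_of_gt hq0)]
      ring
    have h1 : q ^ (1 - a) * p ^ (1 - (1 - a)) * Real.log (q / p) ≤ q / δ := hkey
    rw [hlogeq] at h1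
    have h2 : -(p ^ a * q ^ (1 - a) * Real.log (p / q)) ≤ q / δ := by
      have he : 1 - (1 - a) = a := by ring
      rw [he] at h1
      linarith [h1]
    calc -(p ^ a * q ^ (1 - a) * Real.log (p / q)) ≤ q / δ := h2
      _ ≤ (p + q) / δ := by gcongr; linarith

private lemma amgm_bound {p q a : ℝ} (hp : 0 ≤ p) (hq : 0 ≤ q) (ha0 : 0 ≤ a)
    (ha1 : a ≤ 1) : p ^ a * q ^ (1 - a) ≤ p + q := by
  have h := Real.geom_mean_le_arith_mean2_weighted ha0 (by linarith : (0:ℝ) ≤ 1 - a)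
    hp hq (by ring)
  nlinarith [h, mul_nonneg ha0 hp, mul_nonneg (by linarith : (0:ℝ) ≤ 1 - a) hq]

private lemma hasDeriv_pointwise {p q : ℝ} (hp : 0 ≤ p) (hq : 0 ≤ q) {a : ℝ}
    (ha : a ∈ Set.Ioo (0:ℝ) 1) :
    HasDerivAt (fun b : ℝ => p ^ b * q ^ (1 - b))
      (p ^ a * q ^ (1 - a) * Real.log (p / q)) a := by
  obtain ⟨ha0, ha1⟩ := ha
  rcases hp.eq_or_lt with hp0 | hp0
  · have hev : (fun b : ℝ => p ^ b * q ^ (1 - b)) =ᶠ[nhds a] fun _ => 0 := by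
      filter_upwards [isOpen_Ioi.mem_nhds (ha0 : a ∈ Set.Ioi (0:ℝ))] with b hb
      rw [← hp0, Real.zero_rpow (ne_of_gt hb), zero_mul]
    have h0 : p ^ a * q ^ (1 - a) * Real.log (p / q) = 0 := by
      rw [← hp0, Real.zero_rpow (ne_of_gt ha0)]; ring
    rw [h0]
    exact (hasDerivAt_const a (0:ℝ)).congr_of_eventuallyEq hev
  rcases hq.eq_or_lt with hq0 | hq0
  · have hev : (fun b : ℝ => p ^ b * q ^ (1 - b)) =ᶠ[nhds a] fun _ => 0 := by
      filter_upwards [isOpen_Iio.mem_nhds (ha1 : a ∈ Set.Iio (1:ℝ))] with b hb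
      rw [← hq0, Real.zero_rpow (sub_ne_zero_of_ne (ne_of_gt (Set.mem_Iio.mp hb))),
        mul_zero]
    have h0 : p ^ a * q ^ (1 - a) * Real.log (p / q) = 0 := by
      rw [← hq0, Real.zero_rpow (sub_ne_zero_of_ne (ne_of_gt ha1))]; ring
    rw [h0]
    exact (hasDerivAt_const a (0:ℝ)).congr_of_eventuallyEq hev
  · have h1 : HasDerivAt (fun b : ℝ => p ^ b) (p ^ a * Real.log p) a :=
      (Real.hasStrictDerivAt_const_rpow hp0 a).hasDerivAt
    have h2 : HasDerivAt (fun b : ℝ => q ^ (1 - b))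
        (q ^ (1 - a) * Real.log q * (-1)) a := by
      have hin : HasDerivAt (fun b : ℝ => 1 - b) (-1) a := by
        simpa using (hasDerivAt_id a).const_sub 1
      exact ((Real.hasStrictDerivAt_const_rpow hq0 (1 - a)).hasDerivAt).comp a hin
    have h3 := h1.mul h2
    rw [show p ^ a * q ^ (1 - a) * Real.log (p / q) = p ^ a * Real.log p * q ^ (1 - a)
        + p ^ a * (q ^ (1 - a) * Real.log q * -1) by
      rw [Real.log_div (ne_of_gt hp0) (ne_of_gt hq0)]
      ring]
    exact h3

theorem Z_continuously_differentiable {A : Type*} [MeasurableSpace A]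
    (μ : Measure A) [SigmaFinite μ]
    (p q : A → ℝ) (hp : Measurable p) (hq : Measurable q)
    (hp0 : ∀ x, 0 ≤ p x) (hq0 : ∀ x, 0 ≤ q x)
    (hpint : ∫ x, p x ∂μ = 1) (hqint : ∫ x, q x ∂μ = 1)
    (hDPQ : Integrable (fun x => p x * Real.log (p x / q x)) μ)
    (hDQP : Integrable (fun x => q x * Real.log (p x / q x)) μ) :
    (∀ α ∈ Set.Ioo (0:ℝ) 1,
      HasDerivAt (fun a : ℝ => ∫ x, p x ^ a * q x ^ (1-a) ∂μ)
        (∫ x, p x ^ α * q x ^ (1-α) * Real.log (p x / q x) ∂μ) α) ∧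
    ContinuousOn (fun α : ℝ => ∫ x, p x ^ α * q x ^ (1-α) * Real.log (p x / q x) ∂μ)
      (Set.Ioo (0:ℝ) 1) := by
  have hP : Integrable p μ := by
    by_contra h
    rw [integral_undef h] at hpint
    norm_num at hpint
  have hQ : Integrable q μ := by
    by_contra h
    rw [integral_undef h] at hqint
    norm_num at hqint
  -- measurability of the integrands
  have hFmeas : ∀ a : ℝ, 0 ≤ a → a ≤ 1 →
      AEStronglyMeasurable (fun x => p x ^ a * q x ^ (1 - a)) μ := by
    intro a h0 h1
    exact (((Real.continuous_rpow_const h0).measurable.comp hp).mul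
      ((Real.continuous_rpow_const (by linarith)).measurable.comp hq)).aestronglyMeasurable
  have hF'meas : ∀ a : ℝ, 0 ≤ a → a ≤ 1 →
      AEStronglyMeasurable (fun x => p x ^ a * q x ^ (1 - a) * Real.log (p x / q x)) μ := by
    intro a h0 h1
    exact ((((Real.continuous_rpow_const h0).measurable.comp hp).mul
      ((Real.continuous_rpow_const (by linarith)).measurable.comp hq)).mul
      ((hp.div hq).log)).aestronglyMeasurable
  -- ball membership facts
  have hball : ∀ α ∈ Set.Ioo (0:ℝ) 1, ∀ a ∈ Metric.ball α (min α (1 - α) / 2),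
      min α (1 - α) / 2 ≤ a ∧ a ≤ 1 - min α (1 - α) / 2 := by
    rintro α ⟨hα0, hα1⟩ a ha
    rw [Metric.mem_ball, Real.dist_eq, abs_lt] at ha
    have h1 := min_le_left α (1 - α)
    have h2 := min_le_right α (1 - α)
    constructor <;> linarith [ha.1, ha.2]
  constructor
  · intro α hα
    obtain ⟨hα0, hα1⟩ := hα
    set δ : ℝ := min α (1 - α) / 2 with hδdef
    have hδ : 0 < δ := by
      apply div_pos _ two_pos
      exact lt_min hα0 (by linarith)
    have main := hasDerivAt_integral_of_dominated_loc_of_deriv_le (μ := μ)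
      (F := fun a x => p x ^ a * q x ^ (1 - a))
      (F' := fun a x => p x ^ a * q x ^ (1 - a) * Real.log (p x / q x))
      (x₀ := α) (bound := fun x => (p x + q x) / δ) (Metric.ball_mem_nhds α hδ)
      ?_ ?_ (hF'meas α hα0.le hα1.le) ?_ ?_ ?_
    · exact main.2
    · -- eventual measurability
      filter_upwards [Metric.ball_mem_nhds α hδ] with a ha
      obtain ⟨h1, h2⟩ := hball α ⟨hα0, hα1⟩ a ha
      exact hFmeas a (le_trans hδ.le h1) (by linarith)
    · -- integrability of F α
      apply (hP.add hQ).mono (hFmeas α hα0.le hα1.le)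
      filter_upwards with x
      simp only [Pi.add_apply, Real.norm_eq_abs]
      rw [abs_of_nonneg (add_nonneg (hp0 x) (hq0 x)),
        abs_of_nonneg (mul_nonneg (Real.rpow_nonneg (hp0 x) _)
          (Real.rpow_nonneg (hq0 x) _))]
      exact amgm_bound (hp0 x) (hq0 x) hα0.le hα1.le
    · -- uniform bound on the derivative
      filter_upwards with x a ha
      obtain ⟨h1, h2⟩ := hball α ⟨hα0, hα1⟩ a ha
      rw [Real.norm_eq_abs]
      exact key_bound (hp0 x) (hq0 x) hδ h1 h2
    · exact (hP.add hQ).div_const δ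
    · filter_upwards with x a ha
      obtain ⟨h1, h2⟩ := hball α ⟨hα0, hα1⟩ a ha
      exact hasDeriv_pointwise (hp0 x) (hq0 x) ⟨lt_of_lt_of_le hδ h1, by linarith⟩
  · intro α hα
    obtain ⟨hα0, hα1⟩ := hα
    set δ : ℝ := min α (1 - α) / 2 with hδdef
    have hδ : 0 < δ := by
      apply div_pos _ two_pos
      exact lt_min hα0 (by linarith)
    apply ContinuousAt.continuousWithinAt
    apply continuousAt_of_dominated (bound := fun x => (p x + q x) / δ)
    · filter_upwards [Metric.ball_mem_nhds α hδ] with a ha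
      obtain ⟨h1, h2⟩ := hball α ⟨hα0, hα1⟩ a ha
      exact hF'meas a (le_trans hδ.le h1) (by linarith)
    · filter_upwards [Metric.ball_mem_nhds α hδ] with a ha
      filter_upwards with x
      obtain ⟨h1, h2⟩ := hball α ⟨hα0, hα1⟩ a ha
      rw [Real.norm_eq_abs]
      exact key_bound (hp0 x) (hq0 x) hδ h1 h2
    · exact (hP.add hQ).div_const δ
    · filter_upwards with x
      exact ((hasDeriv_pointwise (hp0 x) (hq0 x) ⟨hα0, hα1⟩).continuousAt).mul
        continuousAt_const
end

section
/- Let P, Q be probability measures with densities p, q with respect to λ, such that ∫ p |log(p/q)|³ dλ and ∫ q |log(p/q)|³ dλ are both finite. Then Z(α) = ∫ p^α q^{1−α} dλ is three times differentiable on (0,1), with Z″(α) = ∫ p^α q^{1−α} (log(p/q))² dλ and Z‴(α) = ∫ p^α q^{1−α} (log(p/q))³ dλ. -/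
open MeasureTheory Real Set

-- pointwise derivative
lemma aux_pt (p q : ℝ) (hp : 0 ≤ p) (hq : 0 ≤ q) (k : ℕ) (a : ℝ) (ha : a ∈ Set.Ioo (0:ℝ) 1) :
    HasDerivAt (fun b : ℝ => p ^ b * q ^ (1-b) * (Real.log (p/q))^k)
      (p ^ a * q ^ (1-a) * (Real.log (p/q))^(k+1)) a := by
  rcases hp.eq_or_lt with hp' | hp'
  · have hz : ∀ b ∈ Set.Ioo (0:ℝ) 1, p ^ b * q ^ (1-b) * (Real.log (p/q))^k = 0 := by
      intro b hb
      rw [← hp', Real.zero_rpow (ne_of_gt hb.1)]; ring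
    have h0 : HasDerivAt (fun _ : ℝ => (0:ℝ)) 0 a := hasDerivAt_const a 0
    have heq : (fun b : ℝ => p ^ b * q ^ (1-b) * (Real.log (p/q))^k) =ᶠ[nhds a]
        (fun _ : ℝ => (0:ℝ)) := by
      filter_upwards [isOpen_Ioo.mem_nhds ha] with b hb using hz b hb
    have := h0.congr_of_eventuallyEq heq
    refine this.congr_deriv ?_
    rw [← hp', Real.zero_rpow (ne_of_gt ha.1)]; ring
  rcases hq.eq_or_lt with hq' | hq'
  · have hz : ∀ b ∈ Set.Ioo (0:ℝ) 1, p ^ b * q ^ (1-b) * (Real.log (p/q))^k = 0 := by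
      intro b hb
      have : (1:ℝ) - b ≠ 0 := by have := hb.2; intro h; linarith
      rw [← hq', Real.zero_rpow this]; ring
    have h0 : HasDerivAt (fun _ : ℝ => (0:ℝ)) 0 a := hasDerivAt_const a 0
    have heq : (fun b : ℝ => p ^ b * q ^ (1-b) * (Real.log (p/q))^k) =ᶠ[nhds a]
        (fun _ : ℝ => (0:ℝ)) := by
      filter_upwards [isOpen_Ioo.mem_nhds ha] with b hb using hz b hb
    have := h0.congr_of_eventuallyEq heq
    refine this.congr_deriv ?_
    have : (1:ℝ) - a ≠ 0 := by have := ha.2; intro h; linarith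
    rw [← hq', Real.zero_rpow this]; ring
  · have h1 : HasDerivAt (fun b : ℝ => p ^ b) (p ^ a * Real.log p) a :=
      (Real.hasStrictDerivAt_const_rpow hp' a).hasDerivAt
    have h2' : HasDerivAt (fun b : ℝ => q ^ b) (q ^ (1-a) * Real.log q) (1-a) :=
      (Real.hasStrictDerivAt_const_rpow hq' (1-a)).hasDerivAt
    have h3 : HasDerivAt (fun b : ℝ => (1:ℝ) - b) (-1) a := by
      exact (hasDerivAt_id' a).const_sub (1:ℝ)
    have h2 : HasDerivAt (fun b : ℝ => q ^ (1-b)) (q ^ (1-a) * Real.log q * (-1)) a :=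
      HasDerivAt.comp a h2' h3
    have h4 := (h1.mul h2).mul_const ((Real.log (p/q))^k)
    refine h4.congr_deriv ?_
    rw [Real.log_div (ne_of_gt hp') (ne_of_gt hq'), pow_succ]
    ring

lemma aux_gm (p q a : ℝ) (hp : 0 ≤ p) (hq : 0 ≤ q) (ha0 : 0 ≤ a) (ha1 : a ≤ 1) :
    p ^ a * q ^ (1-a) ≤ p + q := by
  rcases le_total p q with h | h
  · have h1 : p ^ a ≤ q ^ a := Real.rpow_le_rpow hp h ha0
    have h2 : p ^ a * q ^ (1-a) ≤ q ^ a * q ^ (1-a) :=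
      mul_le_mul_of_nonneg_right h1 (Real.rpow_nonneg hq _)
    have h3 : q ^ a * q ^ (1-a) = q := by
      rw [← Real.rpow_add' hq (by norm_num)]; norm_num
    linarith
  · have h1 : q ^ (1-a) ≤ p ^ (1-a) := Real.rpow_le_rpow hq h (by linarith)
    have h2 : p ^ a * q ^ (1-a) ≤ p ^ a * p ^ (1-a) :=
      mul_le_mul_of_nonneg_left h1 (Real.rpow_nonneg hp _)
    have h3 : p ^ a * p ^ (1-a) = p := by
      rw [← Real.rpow_add' hp (by norm_num)]; norm_num
    linarith

lemma aux_pow3 (t : ℝ) (ht : 0 ≤ t) (j : ℕ) (hj : j ≤ 3) : t ^ j ≤ 1 + t ^ 3 := by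
  rcases le_total t 1 with h | h
  · have := pow_le_one₀ ht h (n := j)
    have := pow_nonneg ht 3
    linarith
  · have := pow_le_pow_right₀ h hj
    have : t ^ j ≤ t ^ 3 := this
    linarith

lemma aux_norm (p q L a : ℝ) (hp : 0 ≤ p) (hq : 0 ≤ q) (ha0 : 0 ≤ a) (ha1 : a ≤ 1)
    (j : ℕ) (hj : j ≤ 3) :
    ‖p ^ a * q ^ (1-a) * L ^ j‖ ≤ (p + q) * (1 + |L|^3) := by
  have hppos : 0 ≤ p ^ a * q ^ (1-a) := by positivity
  rw [Real.norm_eq_abs, abs_mul, abs_of_nonneg hppos, abs_pow]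
  exact mul_le_mul (aux_gm p q a hp hq ha0 ha1) (aux_pow3 _ (abs_nonneg _) j hj)
    (by positivity) (by linarith)

lemma aux_key {A : Type*} [MeasurableSpace A] (μ : Measure A)
    (p q : A → ℝ) (hp : Measurable p) (hq : Measurable q)
    (hp0 : ∀ x, 0 ≤ p x) (hq0 : ∀ x, 0 ≤ q x)
    (hpP : Integrable p μ) (hqQ : Integrable q μ)
    (hP3 : Integrable (fun x => p x * |Real.log (p x / q x)|^3) μ)
    (hQ3 : Integrable (fun x => q x * |Real.log (p x / q x)|^3) μ)
    (k : ℕ) (hk : k ≤ 2) (α : ℝ) (hα : α ∈ Set.Ioo (0:ℝ) 1) :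
    HasDerivAt (fun a : ℝ => ∫ x, p x ^ a * q x ^ (1-a) * (Real.log (p x / q x))^k ∂μ)
      (∫ x, p x ^ α * q x ^ (1-α) * (Real.log (p x / q x))^(k+1) ∂μ) α := by
  set L : A → ℝ := fun x => Real.log (p x / q x) with hL
  set ε : ℝ := min α (1-α) with hε
  have hε_pos : 0 < ε := lt_min hα.1 (by linarith [hα.2])
  have hball : Metric.ball α ε ⊆ Set.Ioo (0:ℝ) 1 := by
    intro b hb
    rw [Metric.mem_ball, Real.dist_eq] at hb
    have h1 : |b - α| < α := lt_of_lt_of_le hb (min_le_left _ _)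
    have h2 : |b - α| < 1 - α := lt_of_lt_of_le hb (min_le_right _ _)
    rw [abs_lt] at h1 h2
    constructor <;> linarith [h1.1, h1.2, h2.1, h2.2]
  have hLmeas : Measurable L := (hp.div hq).log
  have hmeas : ∀ (a : ℝ) (j : ℕ),
      AEStronglyMeasurable (fun x => p x ^ a * q x ^ (1-a) * (L x)^j) μ :=
    fun a j => (((by fun_prop : Measurable fun x => p x ^ a * q x ^ (1-a))).mul
      (hLmeas.pow_const j)).aestronglyMeasurable
  set bound : A → ℝ := fun x => (p x + q x) * (1 + |L x|^3) with hbnd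
  have hbound_int : Integrable bound μ := by
    have heq : bound = fun x => (p x + q x) + (p x * |L x|^3 + q x * |L x|^3) := by
      funext x; simp only [hbnd]; ring
    rw [heq]
    exact (hpP.add hqQ).add (hP3.add hQ3)
  have hb : ∀ (a : ℝ), a ∈ Set.Ioo (0:ℝ) 1 → ∀ (j : ℕ), j ≤ 3 → ∀ x,
      ‖p x ^ a * q x ^ (1-a) * (L x)^j‖ ≤ bound x :=
    fun a ha j hj x => aux_norm (p x) (q x) (L x) a (hp0 x) (hq0 x) ha.1.le ha.2.le j hj
  have hF_int : Integrable (fun x => p x ^ α * q x ^ (1-α) * (L x)^k) μ :=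
    Integrable.mono' hbound_int (hmeas α k)
      (Filter.Eventually.of_forall (hb α hα k (by omega)))
  have key := hasDerivAt_integral_of_dominated_loc_of_deriv_le (μ := μ)
    (F := fun a x => p x ^ a * q x ^ (1-a) * (L x)^k)
    (F' := fun a x => p x ^ a * q x ^ (1-a) * (L x)^(k+1))
    (bound := bound) (Metric.ball_mem_nhds α hε_pos)
    (Filter.Eventually.of_forall (fun a => hmeas a k)) hF_int (hmeas α (k+1))
    (Filter.Eventually.of_forall (fun x a ha => hb a (hball ha) (k+1) (by omega) x))
    hbound_int
    (Filter.Eventually.of_forall (fun x a ha =>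
      aux_pt (p x) (q x) (hp0 x) (hq0 x) k a (hball ha)))
  exact key.2

theorem Z_second_third_derivatives {A : Type*} [MeasurableSpace A]
    (μ : Measure A) [SigmaFinite μ]
    (p q : A → ℝ) (hp : Measurable p) (hq : Measurable q)
    (hp0 : ∀ x, 0 ≤ p x) (hq0 : ∀ x, 0 ≤ q x)
    (hpint : ∫ x, p x ∂μ = 1) (hqint : ∫ x, q x ∂μ = 1)
    (hP3 : Integrable (fun x => p x * |Real.log (p x / q x)|^3) μ)
    (hQ3 : Integrable (fun x => q x * |Real.log (p x / q x)|^3) μ) :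
    ∀ α ∈ Set.Ioo (0:ℝ) 1,
      HasDerivAt (deriv (fun a : ℝ => ∫ x, p x ^ a * q x ^ (1-a) ∂μ))
        (∫ x, p x ^ α * q x ^ (1-α) * (Real.log (p x / q x))^2 ∂μ) α ∧
      HasDerivAt (deriv (deriv (fun a : ℝ => ∫ x, p x ^ a * q x ^ (1-a) ∂μ)))
        (∫ x, p x ^ α * q x ^ (1-α) * (Real.log (p x / q x))^3 ∂μ) α := by
  have hpP : Integrable p μ := by
    by_contra h; rw [integral_undef h] at hpint; norm_num at hpint
  have hqQ : Integrable q μ := by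
    by_contra h; rw [integral_undef h] at hqint; norm_num at hqint
  set L : A → ℝ := fun x => Real.log (p x / q x) with hLdef
  set Z : ℝ → ℝ := fun a => ∫ x, p x ^ a * q x ^ (1-a) ∂μ with hZdef
  set G1 : ℝ → ℝ := fun a => ∫ x, p x ^ a * q x ^ (1-a) * (L x)^1 ∂μ with hG1def
  set G2 : ℝ → ℝ := fun a => ∫ x, p x ^ a * q x ^ (1-a) * (L x)^2 ∂μ with hG2def
  have key := fun (k : ℕ) (hk : k ≤ 2) (a : ℝ) (ha : a ∈ Set.Ioo (0:ℝ) 1) =>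
    aux_key μ p q hp hq hp0 hq0 hpP hqQ hP3 hQ3 k hk a ha
  have hZ : ∀ a ∈ Set.Ioo (0:ℝ) 1, HasDerivAt Z (G1 a) a := by
    intro a ha
    have h := key 0 (by norm_num) a ha
    have hfun : (fun a : ℝ => ∫ x, p x ^ a * q x ^ (1-a) * (L x)^(0:ℕ) ∂μ) = Z := by
      funext b; simp [hZdef]
    rw [hfun] at h
    exact h
  have hderivZ : ∀ a ∈ Set.Ioo (0:ℝ) 1, deriv Z a = G1 a :=
    fun a ha => (hZ a ha).deriv
  have hfirst : ∀ a ∈ Set.Ioo (0:ℝ) 1, HasDerivAt (deriv Z) (G2 a) a := by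
    intro a ha
    have h := key 1 (by norm_num) a ha
    have hev : deriv Z =ᶠ[nhds a] G1 := by
      filter_upwards [isOpen_Ioo.mem_nhds ha] with b hb using hderivZ b hb
    have h' : HasDerivAt G1 (G2 a) a := by
      simpa [hG1def, hG2def] using h
    exact h'.congr_of_eventuallyEq hev
  intro α hα
  refine ⟨by simpa [hG2def] using hfirst α hα, ?_⟩
  have hderiv2 : ∀ a ∈ Set.Ioo (0:ℝ) 1, deriv (deriv Z) a = G2 a :=
    fun a ha => (hfirst a ha).deriv
  have hev2 : deriv (deriv Z) =ᶠ[nhds α] G2 := by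
    filter_upwards [isOpen_Ioo.mem_nhds hα] with b hb using hderiv2 b hb
  have h := key 2 (by norm_num) α hα
  have h' : HasDerivAt G2 (∫ x, p x ^ α * q x ^ (1-α) * (L x)^3 ∂μ) α := by
    simpa [hG2def] using h
  exact h'.congr_of_eventuallyEq hev2
end

section
/- For probability measures P, Q with densities p, q satisfying the third-moment conditions ∫ p |log(p/q)|³ dλ < ∞ and ∫ q |log(p/q)|³ dλ < ∞, define the tilted measure Q_α with density q_α = p^α q^{1−α}/Z(α) for α ∈ (0,1). Then D(Q_α‖P) is differentiable in α with d/dα D(Q_α‖P) = −(1−α)·Var(log(dP/dQ)(X^{(α)})), where X^{(α)} ∼ Q_α. -/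
open MeasureTheory Real Set

noncomputable def Zfun {A : Type*} [MeasurableSpace A] (μ : Measure A) (p q : A → ℝ) (a : ℝ) : ℝ :=
  ∫ x, p x ^ a * q x ^ (1-a) ∂μ

/-- Density of the tilted measure `Q_α`. -/
noncomputable def qdens {A : Type*} [MeasurableSpace A] (μ : Measure A) (p q : A → ℝ) (a : ℝ) (x : A) : ℝ :=
  p x ^ a * q x ^ (1-a) / Zfun μ p q a

/-- `D(Q_α ‖ P)`. -/
noncomputable def DtiltP {A : Type*} [MeasurableSpace A] (μ : Measure A) (p q : A → ℝ) (a : ℝ) : ℝ :=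
  ∫ x, qdens μ p q a x * Real.log (qdens μ p q a x / p x) ∂μ

/-- `D(Q_α ‖ Q)`. -/
noncomputable def DtiltQ {A : Type*} [MeasurableSpace A] (μ : Measure A) (p q : A → ℝ) (a : ℝ) : ℝ :=
  ∫ x, qdens μ p q a x * Real.log (qdens μ p q a x / q x) ∂μ

/-- Mean of the log-likelihood ratio `log(p/q)` under `Q_α`. -/
noncomputable def tiltMean {A : Type*} [MeasurableSpace A] (μ : Measure A) (p q : A → ℝ) (a : ℝ) : ℝ :=
  ∫ x, qdens μ p q a x * Real.log (p x / q x) ∂μ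

/-- Variance of `log(p/q)` under `Q_α`. -/
noncomputable def tiltVar {A : Type*} [MeasurableSpace A] (μ : Measure A) (p q : A → ℝ) (a : ℝ) : ℝ :=
  (∫ x, qdens μ p q a x * (Real.log (p x / q x))^2 ∂μ) - (tiltMean μ p q a)^2

/-- Third central moment of `log(p/q)` under `Q_α`. -/
noncomputable def tiltM3 {A : Type*} [MeasurableSpace A] (μ : Measure A) (p q : A → ℝ) (a : ℝ) : ℝ :=
  ∫ x, qdens μ p q a x * (Real.log (p x / q x) - tiltMean μ p q a)^3 ∂μ

/-- Absolute third central moment of `log(p/q)` under `Q_α`. -/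
noncomputable def tiltM3abs {A : Type*} [MeasurableSpace A] (μ : Measure A) (p q : A → ℝ) (a : ℝ) : ℝ :=
  ∫ x, qdens μ p q a x * |Real.log (p x / q x) - tiltMean μ p q a|^3 ∂μ

/-- Unnormalized tilted density. -/
noncomputable def Ffun {A : Type*} (p q : A → ℝ) (a : ℝ) (x : A) : ℝ :=
  p x ^ a * q x ^ (1-a)

/-- Log-likelihood ratio. -/
noncomputable def Lfun {A : Type*} (p q : A → ℝ) (x : A) : ℝ :=
  Real.log (p x / q x)

theorem aux_pow_le_cube (t : ℝ) (k : ℕ) (hk : k ≤ 3) : |t| ^ k ≤ 1 + |t| ^ 3 := by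
  rcases le_total (|t|) 1 with h | h
  · have h1 : |t| ^ k ≤ 1 := pow_le_one₀ (abs_nonneg t) h
    have h2 : (0:ℝ) ≤ |t| ^ 3 := pow_nonneg (abs_nonneg t) 3
    linarith
  · have h1 : |t| ^ k ≤ |t| ^ 3 := pow_le_pow_right₀ h hk
    linarith


theorem aux_measurable_rpow_const {A : Type*} [MeasurableSpace A] {p : A → ℝ}
    (hp : Measurable p) (hp0 : ∀ x, 0 ≤ p x) (c : ℝ) :
    Measurable (fun x => p x ^ c) := by
  classical
  have heq : (fun x => p x ^ c) =
      fun x => if p x = 0 then ((0:ℝ) ^ c) else Real.exp (Real.log (p x) * c) := by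
    funext x
    split_ifs with h
    · rw [h]
    · exact Real.rpow_def_of_pos (lt_of_le_of_ne (hp0 x) (Ne.symm h)) c
  rw [heq]
  exact Measurable.ite (hp (measurableSet_singleton 0)) measurable_const
    ((Real.measurable_log.comp hp).mul_const c).exp

theorem DtiltP_deriv {A : Type*} [MeasurableSpace A]
    (μ : Measure A) [SigmaFinite μ]
    (p q : A → ℝ) (hp : Measurable p) (hq : Measurable q)
    (hp0 : ∀ x, 0 ≤ p x) (hq0 : ∀ x, 0 ≤ q x)
    (hpint : ∫ x, p x ∂μ = 1) (hqint : ∫ x, q x ∂μ = 1)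
    (hP3 : Integrable (fun x => p x * |Real.log (p x / q x)|^3) μ)
    (hQ3 : Integrable (fun x => q x * |Real.log (p x / q x)|^3) μ) :
    ∀ α ∈ Set.Ioo (0:ℝ) 1,
      HasDerivAt (DtiltP μ p q) (-(1-α) * tiltVar μ p q α) α := by
  intro α₀ hα₀
  obtain ⟨ha0, ha1⟩ := hα₀
  -- basic integrability of p and q
  have hpInt : Integrable p μ := by
    by_contra h; rw [integral_undef h] at hpint; norm_num at hpint
  have hqInt : Integrable q μ := by
    by_contra h; rw [integral_undef h] at hqint; norm_num at hqint
  have hLmeas : Measurable (Lfun p q) := Real.measurable_log.comp (hp.div hq)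
  have hFmeas : ∀ β : ℝ, Measurable (Ffun p q β) := fun β =>
    (aux_measurable_rpow_const hp hp0 β).mul (aux_measurable_rpow_const hq hq0 (1-β))
  have hFnn : ∀ (β : ℝ) (x : A), 0 ≤ Ffun p q β x := fun β x =>
    mul_nonneg (Real.rpow_nonneg (hp0 x) _) (Real.rpow_nonneg (hq0 x) _)
  -- the dominating function
  set B : A → ℝ := fun x => (p x + q x) * (1 + |Lfun p q x| ^ 3) with hBdef
  have hBint : Integrable B μ := by
    have : B = fun x => (p x + q x) + (p x * |Lfun p q x| ^ 3 + q x * |Lfun p q x| ^ 3) := by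
      funext x; simp only [hBdef]; ring
    rw [this]
    exact (hpInt.add hqInt).add (hP3.add hQ3)
  have hBnn : ∀ x, 0 ≤ B x := fun x => by
    have := hp0 x; have := hq0 x
    have : (0:ℝ) ≤ |Lfun p q x| ^ 3 := pow_nonneg (abs_nonneg _) 3
    positivity
  -- pointwise bound F β x ≤ p x + q x for β ∈ [0,1]
  have hFle : ∀ β ∈ Icc (0:ℝ) 1, ∀ x, Ffun p q β x ≤ p x + q x := by
    intro β hβ x
    have h1 : Ffun p q β x ≤ β * p x + (1 - β) * q x :=
      Real.geom_mean_le_arith_mean2_weighted hβ.1 (by linarith [hβ.2]) (hp0 x) (hq0 x) (by ring)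
    nlinarith [hp0 x, hq0 x, hβ.1, hβ.2]
  -- master bound : ‖F β x * L x ^ k‖ ≤ B x
  have hFbound : ∀ (k : ℕ), k ≤ 3 → ∀ β ∈ Icc (0:ℝ) 1, ∀ x,
      ‖Ffun p q β x * Lfun p q x ^ k‖ ≤ B x := by
    intro k hk β hβ x
    rw [Real.norm_eq_abs, abs_mul, abs_pow, abs_of_nonneg (hFnn β x)]
    have h1 : Ffun p q β x ≤ p x + q x := hFle β hβ x
    have h2 : |Lfun p q x| ^ k ≤ 1 + |Lfun p q x| ^ 3 := aux_pow_le_cube _ k hk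
    have h3 : (0:ℝ) ≤ |Lfun p q x| ^ k := pow_nonneg (abs_nonneg _) k
    have h4 : (0:ℝ) ≤ p x + q x := by linarith [hp0 x, hq0 x]
    calc Ffun p q β x * |Lfun p q x| ^ k ≤ (p x + q x) * (1 + |Lfun p q x| ^ 3) :=
          mul_le_mul h1 h2 h3 h4
      _ = B x := rfl
  -- integrability of F β x * L x ^ k
  have hFLkInt : ∀ (k : ℕ), k ≤ 3 → ∀ β ∈ Icc (0:ℝ) 1,
      Integrable (fun x => Ffun p q β x * Lfun p q x ^ k) μ := by
    intro k hk β hβ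
    refine hBint.mono ((hFmeas β).mul (hLmeas.pow_const k)).aestronglyMeasurable ?_
    exact Filter.Eventually.of_forall fun x => by
      rw [Real.norm_eq_abs (B x), abs_of_nonneg (hBnn x)]; exact hFbound k hk β hβ x
  have hFInt : ∀ β ∈ Icc (0:ℝ) 1, Integrable (Ffun p q β) μ := by
    intro β hβ
    have := hFLkInt 0 (by norm_num) β hβ
    simpa using this
  -- pointwise derivative of β ↦ F β x
  have hFderiv : ∀ x, ∀ β ∈ Ioo (0:ℝ) 1,
      HasDerivAt (fun b => Ffun p q b x) (Ffun p q β x * Lfun p q x) β := by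
    intro x β hβ
    by_cases hx : 0 < p x ∧ 0 < q x
    · obtain ⟨hpx, hqx⟩ := hx
      have key : ∀ b : ℝ, Ffun p q b x = q x * Real.exp (b * Lfun p q x) := by
        intro b
        simp only [Ffun, Lfun]
        rw [Real.rpow_def_of_pos hpx, Real.rpow_def_of_pos hqx,
          Real.log_div hpx.ne' hqx.ne']
        calc Real.exp (Real.log (p x) * b) * Real.exp (Real.log (q x) * (1 - b))
            = Real.exp (Real.log (p x) * b + Real.log (q x) * (1 - b)) :=
              (Real.exp_add _ _).symm
          _ = Real.exp (Real.log (q x)) *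
                Real.exp (b * (Real.log (p x) - Real.log (q x))) := by
              rw [← Real.exp_add]; congr 1; ring
          _ = q x * Real.exp (b * (Real.log (p x) - Real.log (q x))) := by
              rw [Real.exp_log hqx]
      have h0 : HasDerivAt (fun b : ℝ => Real.exp (b * Lfun p q x))
          (Real.exp (β * Lfun p q x) * Lfun p q x) β := by
        simpa using ((hasDerivAt_id β).mul_const (Lfun p q x)).exp
      have h1 : HasDerivAt (fun b : ℝ => q x * Real.exp (b * Lfun p q x))
          (q x * (Real.exp (β * Lfun p q x) * Lfun p q x)) β := h0.const_mul (q x)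
      have h2 : HasDerivAt (fun b => Ffun p q b x)
          (q x * (Real.exp (β * Lfun p q x) * Lfun p q x)) β := by
        refine h1.congr_of_eventuallyEq (Filter.Eventually.of_forall fun b => (key b))
      convert h2 using 1
      rw [key β]; ring
    · have hzero : ∀ b ∈ Ioo (0:ℝ) 1, Ffun p q b x = 0 := by
        intro b hb
        rcases not_and_or.mp hx with h | h
        · have hpx : p x = 0 := le_antisymm (not_lt.mp h) (hp0 x)
          simp [Ffun, hpx, Real.zero_rpow hb.1.ne']
        · have hqx : q x = 0 := le_antisymm (not_lt.mp h) (hq0 x)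
          have : (1:ℝ) - b ≠ 0 := by have := hb.2; intro hc; linarith [sub_eq_zero.mp hc]
          simp [Ffun, hqx, Real.zero_rpow this]
      have h1 : HasDerivAt (fun b => Ffun p q b x) 0 β := by
        refine (hasDerivAt_const β (0:ℝ)).congr_of_eventuallyEq ?_
        filter_upwards [Ioo_mem_nhds hβ.1 hβ.2] with b hb
        exact hzero b hb
      convert h1 using 1
      rw [hzero β hβ]; ring
  -- split on degeneracy of Z
  have hZnn : 0 ≤ Zfun μ p q α₀ := integral_nonneg fun x => hFnn α₀ x
  by_cases hZpos : 0 < Zfun μ p q α₀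
  case neg =>
    -- degenerate case : Z α₀ = 0, everything vanishes on Ioo 0 1
    have hZ0 : Zfun μ p q α₀ = 0 := le_antisymm (not_lt.mp hZpos) hZnn
    have hF0 : Ffun p q α₀ =ᵐ[μ] 0 := by
      have hint : Integrable (Ffun p q α₀) μ := hFInt α₀ ⟨ha0.le, ha1.le⟩
      exact (integral_eq_zero_iff_of_nonneg (fun x => hFnn α₀ x) hint).mp hZ0
    have hnull : ∀ᵐ x ∂μ, p x = 0 ∨ q x = 0 := by
      filter_upwards [hF0] with x hx
      by_contra hc
      push_neg at hc
      have hpx : 0 < p x := lt_of_le_of_ne (hp0 x) (Ne.symm hc.1)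
      have hqx : 0 < q x := lt_of_le_of_ne (hq0 x) (Ne.symm hc.2)
      have : 0 < Ffun p q α₀ x :=
        mul_pos (Real.rpow_pos_of_pos hpx _) (Real.rpow_pos_of_pos hqx _)
      exact this.ne' (by simpa using hx)
    have hZall : ∀ β ∈ Ioo (0:ℝ) 1, Zfun μ p q β = 0 := by
      intro β hβ
      have : Ffun p q β =ᵐ[μ] 0 := by
        filter_upwards [hnull] with x hx
        rcases hx with h | h
        · simp [Ffun, h, Real.zero_rpow hβ.1.ne']
        · have : (1:ℝ) - β ≠ 0 := by have := hβ.2; intro hc; linarith [sub_eq_zero.mp hc]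
          simp [Ffun, h, Real.zero_rpow this]
      calc Zfun μ p q β = ∫ x, Ffun p q β x ∂μ := rfl
        _ = ∫ x, (0:ℝ) ∂μ := integral_congr_ae this
        _ = 0 := integral_zero _ _
    have hD0 : ∀ β ∈ Ioo (0:ℝ) 1, DtiltP μ p q β = 0 := by
      intro β hβ
      simp [DtiltP, qdens, hZall β hβ]
    have hVar0 : tiltVar μ p q α₀ = 0 := by
      simp [tiltVar, tiltMean, qdens, hZ0]
    have heq : DtiltP μ p q =ᶠ[nhds α₀] fun _ => 0 := by
      filter_upwards [Ioo_mem_nhds ha0 ha1] with b hb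
      exact hD0 b hb
    have := (hasDerivAt_const α₀ (0:ℝ)).congr_of_eventuallyEq heq
    have h0 : -(1-α₀) * tiltVar μ p q α₀ = 0 := by rw [hVar0]; ring
    rw [h0]; exact this
  case pos =>
    -- main case
    set Z : ℝ → ℝ := Zfun μ p q with hZdef
    have hZeq : ∀ β, Z β = ∫ x, Ffun p q β x ∂μ := fun β => rfl
    -- support of F β is independent of β on (0,1)
    have hsupp : ∀ β ∈ Ioo (0:ℝ) 1,
        Function.support (Ffun p q β) = {x | 0 < p x ∧ 0 < q x} := by
      intro β hβ
      ext x
      simp only [Function.mem_support, Set.mem_setOf_eq]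
      constructor
      · intro h
        by_contra hc
        rcases not_and_or.mp hc with h' | h'
        · have hpx : p x = 0 := le_antisymm (not_lt.mp h') (hp0 x)
          exact h (by simp [Ffun, hpx, Real.zero_rpow hβ.1.ne'])
        · have hqx : q x = 0 := le_antisymm (not_lt.mp h') (hq0 x)
          have hne : (1:ℝ) - β ≠ 0 := by have := hβ.2; intro hc2; linarith [sub_eq_zero.mp hc2]
          exact h (by simp [Ffun, hqx, Real.zero_rpow hne])
      · rintro ⟨hpx, hqx⟩
        exact (mul_pos (Real.rpow_pos_of_pos hpx _) (Real.rpow_pos_of_pos hqx _)).ne'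
    have hZposβ : ∀ β ∈ Ioo (0:ℝ) 1, 0 < Z β := by
      intro β hβ
      have hint := hFInt β ⟨hβ.1.le, hβ.2.le⟩
      rw [hZeq β, integral_pos_iff_support_of_nonneg (fun x => hFnn β x) hint, hsupp β hβ]
      have h0 := hZpos
      rw [hZeq α₀,
        integral_pos_iff_support_of_nonneg (fun x => hFnn α₀ x) (hFInt α₀ ⟨ha0.le, ha1.le⟩),
        hsupp α₀ ⟨ha0, ha1⟩] at h0
      exact h0
    -- derivatives of Z and I1 via differentiation under the integral sign
    set I1 : ℝ → ℝ := fun β => ∫ x, Ffun p q β x * Lfun p q x ∂μ with hI1def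
    set ε : ℝ := min α₀ (1 - α₀) with hεdef
    have hε : 0 < ε := lt_min ha0 (by linarith)
    have hball : Metric.ball α₀ ε ⊆ Ioo (0:ℝ) 1 := by
      intro x hx
      rw [Metric.mem_ball, Real.dist_eq, abs_lt] at hx
      constructor
      · have : ε ≤ α₀ := min_le_left _ _
        linarith [hx.1]
      · have : ε ≤ 1 - α₀ := min_le_right _ _
        linarith [hx.2]
    have hZderiv : HasDerivAt Z (I1 α₀) α₀ := by
      have := (hasDerivAt_integral_of_dominated_loc_of_deriv_le (F := fun β x => Ffun p q β x)
        (F' := fun β x => Ffun p q β x * Lfun p q x) (bound := B) (Metric.ball_mem_nhds α₀ hε)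
        (Filter.Eventually.of_forall fun β => (hFmeas β).aestronglyMeasurable)
        (hFInt α₀ ⟨ha0.le, ha1.le⟩)
        ((hFmeas α₀).mul hLmeas).aestronglyMeasurable
        (Filter.Eventually.of_forall fun x => fun β hβ => by
          have hβ' := hball hβ
          simpa using hFbound 1 (by norm_num) β ⟨hβ'.1.le, hβ'.2.le⟩ x)
        hBint
        (Filter.Eventually.of_forall fun x => fun β hβ => hFderiv x β (hball hβ))).2
      exact this
    have hI1deriv : HasDerivAt I1 (∫ x, Ffun p q α₀ x * Lfun p q x ^ 2 ∂μ) α₀ := by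
      have := (hasDerivAt_integral_of_dominated_loc_of_deriv_le
        (F := fun β x => Ffun p q β x * Lfun p q x)
        (F' := fun β x => Ffun p q β x * Lfun p q x ^ 2) (bound := B) (Metric.ball_mem_nhds α₀ hε)
        (Filter.Eventually.of_forall fun β => ((hFmeas β).mul hLmeas).aestronglyMeasurable)
        (by simpa using hFLkInt 1 (by norm_num) α₀ ⟨ha0.le, ha1.le⟩)
        ((hFmeas α₀).mul (hLmeas.pow_const 2)).aestronglyMeasurable
        (Filter.Eventually.of_forall fun x => fun β hβ => by
          have hβ' := hball hβ
          exact hFbound 2 (by norm_num) β ⟨hβ'.1.le, hβ'.2.le⟩ x)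
        hBint
        (Filter.Eventually.of_forall fun x => fun β hβ => by
          have h := (hFderiv x β (hball hβ)).mul_const (Lfun p q x)
          exact h.congr_deriv (by ring))).2
      exact this
    -- identity DtiltP β = (β-1) * (I1 β / Z β) - log (Z β) on Ioo 0 1
    have hDg : ∀ β ∈ Ioo (0:ℝ) 1,
        DtiltP μ p q β = (β - 1) * (I1 β / Z β) - Real.log (Z β) := by
      intro β hβ
      have hZβ : 0 < Z β := hZposβ β hβ
      have hptwise : ∀ x, qdens μ p q β x * Real.log (qdens μ p q β x / p x) =
          ((β - 1) / Z β) * (Ffun p q β x * Lfun p q x) -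
            (Real.log (Z β) / Z β) * Ffun p q β x := by
        intro x
        have hqd : qdens μ p q β x = Ffun p q β x / Z β := rfl
        by_cases hx : 0 < p x ∧ 0 < q x
        · obtain ⟨hpx, hqx⟩ := hx
          have hFx : 0 < Ffun p q β x :=
            mul_pos (Real.rpow_pos_of_pos hpx _) (Real.rpow_pos_of_pos hqx _)
          rw [hqd, Real.log_div (div_pos hFx hZβ).ne' hpx.ne',
            Real.log_div hFx.ne' hZβ.ne']
          have hlogF : Real.log (Ffun p q β x) =
              β * Real.log (p x) + (1 - β) * Real.log (q x) := by
            simp only [Ffun]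
            rw [Real.log_mul (Real.rpow_pos_of_pos hpx _).ne' (Real.rpow_pos_of_pos hqx _).ne',
              Real.log_rpow hpx, Real.log_rpow hqx]
          have hlogL : Lfun p q x = Real.log (p x) - Real.log (q x) := by
            simp only [Lfun]; exact Real.log_div hpx.ne' hqx.ne'
          rw [hlogF, hlogL]
          field_simp
          ring
        · have hFx : Ffun p q β x = 0 := by
            rcases not_and_or.mp hx with h | h
            · have hpx : p x = 0 := le_antisymm (not_lt.mp h) (hp0 x)
              simp [Ffun, hpx, Real.zero_rpow hβ.1.ne']
            · have hqx : q x = 0 := le_antisymm (not_lt.mp h) (hq0 x)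
              have hne : (1:ℝ) - β ≠ 0 := by
                have := hβ.2; intro hc; linarith [sub_eq_zero.mp hc]
              simp [Ffun, hqx, Real.zero_rpow hne]
          rw [hqd, hFx]
          simp
      have hFL1 : Integrable (fun x => Ffun p q β x * Lfun p q x) μ := by
        simpa using hFLkInt 1 (by norm_num) β ⟨hβ.1.le, hβ.2.le⟩
      have hint1 : Integrable (fun x => ((β - 1) / Z β) * (Ffun p q β x * Lfun p q x)) μ :=
        hFL1.const_mul _
      have hint2 : Integrable (fun x => (Real.log (Z β) / Z β) * Ffun p q β x) μ :=
        (hFInt β ⟨hβ.1.le, hβ.2.le⟩).const_mul _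
      calc DtiltP μ p q β
          = ∫ x, (((β - 1) / Z β) * (Ffun p q β x * Lfun p q x) -
              (Real.log (Z β) / Z β) * Ffun p q β x) ∂μ := by
            refine integral_congr_ae (Filter.Eventually.of_forall fun x => ?_)
            exact hptwise x
        _ = ((β - 1) / Z β) * I1 β - (Real.log (Z β) / Z β) * Z β := by
            rw [integral_sub hint1 hint2, integral_const_mul, integral_const_mul]
            rfl
        _ = (β - 1) * (I1 β / Z β) - Real.log (Z β) := by
            field_simp
    -- derivative of the right-hand side
    set I2 : ℝ := ∫ x, Ffun p q α₀ x * Lfun p q x ^ 2 ∂μ with hI2def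
    have hZα : 0 < Z α₀ := hZpos
    have hdivderiv : HasDerivAt (fun β => I1 β / Z β)
        ((I2 * Z α₀ - I1 α₀ * I1 α₀) / Z α₀ ^ 2) α₀ := hI1deriv.div hZderiv hZα.ne'
    have hgderiv : HasDerivAt (fun β => (β - 1) * (I1 β / Z β) - Real.log (Z β))
        (1 * (I1 α₀ / Z α₀) + (α₀ - 1) * ((I2 * Z α₀ - I1 α₀ * I1 α₀) / Z α₀ ^ 2)
          - I1 α₀ / Z α₀) α₀ := by
      have h1 : HasDerivAt (fun β : ℝ => β - 1) 1 α₀ := (hasDerivAt_id α₀).sub_const 1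
      have h2 := h1.mul hdivderiv
      have h3 : HasDerivAt (fun β => Real.log (Z β)) (I1 α₀ / Z α₀) α₀ := by
        simpa [div_eq_mul_inv] using hZderiv.log hZα.ne'
      exact h2.sub h3
    have hfinal : HasDerivAt (DtiltP μ p q)
        (1 * (I1 α₀ / Z α₀) + (α₀ - 1) * ((I2 * Z α₀ - I1 α₀ * I1 α₀) / Z α₀ ^ 2)
          - I1 α₀ / Z α₀) α₀ := by
      refine hgderiv.congr_of_eventuallyEq ?_
      filter_upwards [Ioo_mem_nhds ha0 ha1] with b hb
      exact hDg b hb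
    -- identify the derivative with -(1-α₀) * tiltVar
    have hmean : tiltMean μ p q α₀ = I1 α₀ / Z α₀ := by
      have : ∀ x, qdens μ p q α₀ x * Real.log (p x / q x) =
          (Ffun p q α₀ x * Lfun p q x) / Z α₀ := fun x => by
        simp only [qdens, Ffun, Lfun]
        ring
      rw [tiltMean]
      rw [integral_congr_ae (Filter.Eventually.of_forall this), integral_div]
    have hm2 : (∫ x, qdens μ p q α₀ x * (Real.log (p x / q x))^2 ∂μ) = I2 / Z α₀ := by
      have : ∀ x, qdens μ p q α₀ x * (Real.log (p x / q x))^2 =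
          (Ffun p q α₀ x * Lfun p q x ^ 2) / Z α₀ := fun x => by
        simp only [qdens, Ffun, Lfun]
        ring
      rw [integral_congr_ae (Filter.Eventually.of_forall this), integral_div]
    have hvar : tiltVar μ p q α₀ = I2 / Z α₀ - (I1 α₀ / Z α₀) ^ 2 := by
      rw [tiltVar, hm2, hmean]
    convert hfinal using 1
    rw [hvar]
    field_simp
    ring
end

section
/- Under the same hypotheses, D(Q_α‖Q) is differentiable in α ∈ (0,1) with d/dα D(Q_α‖Q) = α·Var(log(dP/dQ)(X^{(α)})), where X^{(α)} ∼ Q_α. -/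
open MeasureTheory Real Set

namespace DtiltAux

variable {A : Type*} [MeasurableSpace A]

noncomputable def FF (p q : A → ℝ) (a : ℝ) (x : A) : ℝ :=
  Set.indicator {y | 0 < p y ∧ 0 < q y} (fun y => q y * Real.exp (a * Real.log (p y / q y))) x

theorem FF_eq {p q : A → ℝ} (hp0 : ∀ x, 0 ≤ p x) (hq0 : ∀ x, 0 ≤ q x) {a : ℝ}
    (ha : a ∈ Set.Ioo (0:ℝ) 1) (x : A) : FF p q a x = p x ^ a * q x ^ (1-a) := by
  by_cases hx : x ∈ {y | 0 < p y ∧ 0 < q y}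
  · rw [FF, Set.indicator_of_mem hx]
    obtain ⟨hpx, hqx⟩ := hx
    rw [Real.log_div hpx.ne' hqx.ne', Real.rpow_def_of_pos hpx, Real.rpow_def_of_pos hqx,
      ← Real.exp_add]
    nth_rewrite 1 [← Real.exp_log hqx]
    rw [← Real.exp_add]
    congr 1
    ring
  · rw [FF, Set.indicator_of_notMem hx]
    rcases not_and_or.mp hx with h | h
    · have : p x = 0 := le_antisymm (not_lt.mp h) (hp0 x)
      rw [this, Real.zero_rpow ha.1.ne', zero_mul]
    · have : q x = 0 := le_antisymm (not_lt.mp h) (hq0 x)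
      rw [this, Real.zero_rpow (by linarith [ha.2] : (1:ℝ) - a ≠ 0), mul_zero]

theorem FF_nonneg {p q : A → ℝ} (hq0 : ∀ x, 0 ≤ q x) (a : ℝ) (x : A) : 0 ≤ FF p q a x := by
  unfold FF
  exact Set.indicator_nonneg (fun y _ => mul_nonneg (hq0 y) (Real.exp_nonneg _)) x

theorem FF_le {p q : A → ℝ} (hp0 : ∀ x, 0 ≤ p x) (hq0 : ∀ x, 0 ≤ q x) {a : ℝ}
    (ha : a ∈ Set.Ioo (0:ℝ) 1) (x : A) : FF p q a x ≤ p x + q x := by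
  rw [FF_eq hp0 hq0 ha x]
  have h := Real.geom_mean_le_arith_mean2_weighted ha.1.le (by linarith [ha.2] : 0 ≤ 1 - a)
    (hp0 x) (hq0 x) (by ring)
  nlinarith [hp0 x, hq0 x, ha.1, ha.2]

theorem FF_measurable {p q : A → ℝ} (hp : Measurable p) (hq : Measurable q) (a : ℝ) :
    Measurable (FF p q a) := by
  unfold FF
  exact (hq.mul (((hp.div hq).log.const_mul a).exp)).indicator
    ((measurableSet_lt measurable_const hp).inter (measurableSet_lt measurable_const hq))

theorem FF_hasDeriv (p q : A → ℝ) (a : ℝ) (x : A) :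
    HasDerivAt (fun b => FF p q b x) (FF p q a x * Real.log (p x / q x)) a := by
  by_cases hx : x ∈ {y | 0 < p y ∧ 0 < q y}
  · simp only [FF, Set.indicator_of_mem hx]
    have h := (((hasDerivAt_id a).mul_const (Real.log (p x / q x))).exp).const_mul (q x)
    simpa [id, mul_comm, mul_assoc, mul_left_comm] using h
  · simp only [FF, Set.indicator_of_notMem hx]
    simpa using hasDerivAt_const a (0:ℝ)

theorem FF_support {p q : A → ℝ} (a : ℝ) :
    Function.support (FF p q a) = {y | 0 < p y ∧ 0 < q y} := by
  ext x
  simp only [Function.mem_support, FF]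
  constructor
  · intro h
    by_contra hx
    exact h (Set.indicator_of_notMem hx _)
  · intro hx
    rw [Set.indicator_of_mem hx]
    exact (mul_pos hx.2 (Real.exp_pos _)).ne'

theorem abs_le_one_add_cube (t : ℝ) : |t| ≤ 1 + |t|^3 := by
  nlinarith [abs_nonneg t, sq_nonneg (|t| - 1), mul_nonneg (mul_nonneg (abs_nonneg t) (abs_nonneg t)) (abs_nonneg t)]

theorem sq_le_one_add_cube (t : ℝ) : t^2 ≤ 1 + |t|^3 := by
  nlinarith [abs_nonneg t, sq_abs t, sq_nonneg (|t| - 1), mul_nonneg (mul_nonneg (abs_nonneg t) (abs_nonneg t)) (abs_nonneg t)]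

end DtiltAux
theorem DtiltQ_deriv {A : Type*} [MeasurableSpace A]
    (μ : Measure A) [SigmaFinite μ]
    (p q : A → ℝ) (hp : Measurable p) (hq : Measurable q)
    (hp0 : ∀ x, 0 ≤ p x) (hq0 : ∀ x, 0 ≤ q x)
    (hpint : ∫ x, p x ∂μ = 1) (hqint : ∫ x, q x ∂μ = 1)
    (hP3 : Integrable (fun x => p x * |Real.log (p x / q x)|^3) μ)
    (hQ3 : Integrable (fun x => q x * |Real.log (p x / q x)|^3) μ) :
    ∀ α ∈ Set.Ioo (0:ℝ) 1,
      HasDerivAt (DtiltQ μ p q) (α * tiltVar μ p q α) α := by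
  intro α hα
  obtain ⟨hα0, hα1⟩ := hα
  have hαmem : α ∈ Set.Ioo (0:ℝ) 1 := ⟨hα0, hα1⟩
  -- basic integrability
  have hpInt : Integrable p μ := by
    by_contra h; rw [integral_undef h] at hpint; norm_num at hpint
  have hqInt : Integrable q μ := by
    by_contra h; rw [integral_undef h] at hqint; norm_num at hqint
  have hpqInt : Integrable (fun x => p x + q x) μ := hpInt.add hqInt
  have hLmeas : Measurable (fun x => Real.log (p x / q x)) := (hp.div hq).log
  have hb3 : Integrable (fun x => (p x + q x) * |Real.log (p x / q x)|^3) μ := by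
    have h := hP3.add hQ3
    refine h.congr (Filter.Eventually.of_forall fun x => ?_)
    simp only [Pi.add_apply]
    rw [add_mul]
  have hbig : Integrable (fun x => (p x + q x) + (p x + q x) * |Real.log (p x / q x)|^3) μ :=
    hpqInt.add hb3
  have hpq_nonneg : ∀ x, (0:ℝ) ≤ p x + q x := fun x => by linarith [hp0 x, hq0 x]
  have hb1 : Integrable (fun x => (p x + q x) * |Real.log (p x / q x)|) μ := by
    refine hbig.mono ((hp.add hq).mul hLmeas.abs).aestronglyMeasurable
      (Filter.Eventually.of_forall fun x => ?_)
    have h1 := DtiltAux.abs_le_one_add_cube (Real.log (p x / q x))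
    have h2 := hpq_nonneg x
    have h3 : (0:ℝ) ≤ |Real.log (p x / q x)| := abs_nonneg _
    rw [Real.norm_eq_abs, Real.norm_eq_abs, abs_of_nonneg (mul_nonneg h2 h3),
      abs_of_nonneg (add_nonneg h2 (mul_nonneg h2 (by positivity)))]
    nlinarith
  have hb2 : Integrable (fun x => (p x + q x) * (Real.log (p x / q x))^2) μ := by
    refine hbig.mono ((hp.add hq).mul (hLmeas.pow_const 2)).aestronglyMeasurable
      (Filter.Eventually.of_forall fun x => ?_)
    have h1 := DtiltAux.sq_le_one_add_cube (Real.log (p x / q x))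
    have h2 := hpq_nonneg x
    have h3 : (0:ℝ) ≤ |Real.log (p x / q x)| := abs_nonneg _
    rw [Real.norm_eq_abs, Real.norm_eq_abs, abs_of_nonneg (mul_nonneg h2 (sq_nonneg _)),
      abs_of_nonneg (add_nonneg h2 (mul_nonneg h2 (by positivity)))]
    nlinarith [sq_nonneg (Real.log (p x / q x))]
  -- integrability of FF and FF * L
  have hFint : ∀ a ∈ Set.Ioo (0:ℝ) 1, Integrable (DtiltAux.FF p q a) μ := by
    intro a ha
    refine hpqInt.mono (DtiltAux.FF_measurable hp hq a).aestronglyMeasurable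
      (Filter.Eventually.of_forall fun x => ?_)
    rw [Real.norm_eq_abs, Real.norm_eq_abs, abs_of_nonneg (DtiltAux.FF_nonneg hq0 a x),
      abs_of_nonneg (hpq_nonneg x)]
    exact DtiltAux.FF_le hp0 hq0 ha x
  have hint1 : ∀ a ∈ Set.Ioo (0:ℝ) 1,
      Integrable (fun x => DtiltAux.FF p q a x * Real.log (p x / q x)) μ := by
    intro a ha
    refine hb1.mono ((DtiltAux.FF_measurable hp hq a).mul hLmeas).aestronglyMeasurable
      (Filter.Eventually.of_forall fun x => ?_)
    rw [Real.norm_eq_abs, Real.norm_eq_abs, abs_mul,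
      abs_of_nonneg (DtiltAux.FF_nonneg hq0 a x),
      abs_of_nonneg (mul_nonneg (hpq_nonneg x) (abs_nonneg _))]
    exact mul_le_mul_of_nonneg_right (DtiltAux.FF_le hp0 hq0 ha x) (abs_nonneg _)
  -- radius
  set ε : ℝ := min α (1 - α) with hεdef
  have hε : 0 < ε := lt_min hα0 (by linarith)
  have hball : ∀ b ∈ Metric.ball α ε, b ∈ Set.Ioo (0:ℝ) 1 := by
    intro b hb
    rw [Metric.mem_ball, Real.dist_eq, abs_lt] at hb
    have h1 : ε ≤ α := min_le_left _ _
    have h2 : ε ≤ 1 - α := min_le_right _ _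
    constructor <;> linarith [hb.1, hb.2]
  -- derivative of Z
  have hZd : HasDerivAt (fun a => ∫ x, DtiltAux.FF p q a x ∂μ)
      (∫ x, DtiltAux.FF p q α x * Real.log (p x / q x) ∂μ) α := by
    refine (hasDerivAt_integral_of_dominated_loc_of_deriv_le (Metric.ball_mem_nhds α hε)
      (Filter.Eventually.of_forall fun b => (DtiltAux.FF_measurable hp hq b).aestronglyMeasurable)
      (hFint α hαmem)
      (F' := fun b x => DtiltAux.FF p q b x * Real.log (p x / q x))
      ((DtiltAux.FF_measurable hp hq α).mul hLmeas).aestronglyMeasurable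
      (Filter.Eventually.of_forall fun x b hb => ?_) hb1
      (Filter.Eventually.of_forall fun x b _ => DtiltAux.FF_hasDeriv p q b x)).2
    rw [Real.norm_eq_abs, abs_mul, abs_of_nonneg (DtiltAux.FF_nonneg hq0 b x)]
    exact mul_le_mul_of_nonneg_right (DtiltAux.FF_le hp0 hq0 (hball b hb) x) (abs_nonneg _)
  -- derivative of N
  have hNd : HasDerivAt (fun a => ∫ x, DtiltAux.FF p q a x * Real.log (p x / q x) ∂μ)
      (∫ x, DtiltAux.FF p q α x * (Real.log (p x / q x))^2 ∂μ) α := by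
    refine (hasDerivAt_integral_of_dominated_loc_of_deriv_le (Metric.ball_mem_nhds α hε)
      (Filter.Eventually.of_forall fun b =>
        ((DtiltAux.FF_measurable hp hq b).mul hLmeas).aestronglyMeasurable)
      (hint1 α hαmem)
      (F' := fun b x => DtiltAux.FF p q b x * (Real.log (p x / q x))^2)
      ((DtiltAux.FF_measurable hp hq α).mul (hLmeas.pow_const 2)).aestronglyMeasurable
      (Filter.Eventually.of_forall fun x b hb => ?_) hb2
      (Filter.Eventually.of_forall fun x b _ => ?_)).2
    · rw [Real.norm_eq_abs, abs_mul, abs_of_nonneg (DtiltAux.FF_nonneg hq0 b x),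
        abs_of_nonneg (sq_nonneg _)]
      exact mul_le_mul_of_nonneg_right (DtiltAux.FF_le hp0 hq0 (hball b hb) x) (sq_nonneg _)
    · have h := (DtiltAux.FF_hasDeriv p q b x).mul_const (Real.log (p x / q x))
      exact h.congr_deriv (by ring)
  -- case split on whether Z α is zero
  rcases eq_or_lt_of_le (integral_nonneg (f := DtiltAux.FF p q α) (DtiltAux.FF_nonneg (p := p) hq0 α)) with hzero | hpos
  · -- degenerate case : p and q mutually singular
    have hae : (fun x => DtiltAux.FF p q α x) =ᵐ[μ] 0 :=
      (integral_eq_zero_iff_of_nonneg (DtiltAux.FF_nonneg (p := p) hq0 α) (hFint α hαmem)).mp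
        hzero.symm
    have hS0 : μ {y | 0 < p y ∧ 0 < q y} = 0 := by
      rw [← DtiltAux.FF_support (p := p) (q := q) α]
      rw [Filter.EventuallyEq, ae_iff] at hae
      exact hae
    have hnm : ∀ᵐ x ∂μ, x ∉ {y | 0 < p y ∧ 0 < q y} := by
      rw [ae_iff]
      simpa using hS0
    have hFa0 : ∀ a : ℝ, (fun x => DtiltAux.FF p q a x) =ᵐ[μ] 0 := fun a =>
      hnm.mono fun x hx => Set.indicator_of_notMem hx _
    have hZfun0 : ∀ a ∈ Set.Ioo (0:ℝ) 1, Zfun μ p q a = 0 := by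
      intro a ha
      unfold Zfun
      rw [integral_congr_ae (Filter.Eventually.of_forall fun x =>
        (DtiltAux.FF_eq hp0 hq0 ha x).symm)]
      simpa using integral_congr_ae (hFa0 a)
    have hqd0 : ∀ a ∈ Set.Ioo (0:ℝ) 1, ∀ x, qdens μ p q a x = 0 := by
      intro a ha x
      unfold qdens
      rw [hZfun0 a ha, div_zero]
    have hD0 : ∀ a ∈ Set.Ioo (0:ℝ) 1, DtiltQ μ p q a = 0 := by
      intro a ha
      unfold DtiltQ
      simp [hqd0 a ha]
    have hvar0 : tiltVar μ p q α = 0 := by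
      unfold tiltVar tiltMean
      simp [hqd0 α hαmem]
    rw [hvar0, mul_zero]
    exact (hasDerivAt_const α (0:ℝ)).congr_of_eventuallyEq
      (Filter.eventuallyEq_of_mem (Ioo_mem_nhds hα0 hα1) fun a ha => hD0 a ha)
  · -- nondegenerate case
    have hZpos : ∀ a ∈ Set.Ioo (0:ℝ) 1, 0 < ∫ x, DtiltAux.FF p q a x ∂μ := by
      intro a ha
      have hμS : 0 < μ (Function.support (DtiltAux.FF p q α)) :=
        (integral_pos_iff_support_of_nonneg (DtiltAux.FF_nonneg (p := p) hq0 α)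
          (hFint α hαmem)).mp hpos
      refine (integral_pos_iff_support_of_nonneg (DtiltAux.FF_nonneg (p := p) hq0 a)
        (hFint a ha)).mpr ?_
      rw [DtiltAux.FF_support]
      rwa [DtiltAux.FF_support] at hμS
    have hZαpos := hZpos α hαmem
    -- qdens in terms of FF
    have hqd : ∀ a ∈ Set.Ioo (0:ℝ) 1, ∀ x,
        qdens μ p q a x = DtiltAux.FF p q a x / ∫ y, DtiltAux.FF p q a y ∂μ := by
      intro a ha x
      unfold qdens Zfun
      congr 1
      · exact (DtiltAux.FF_eq hp0 hq0 ha x).symm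
      · exact integral_congr_ae (Filter.Eventually.of_forall fun y =>
          (DtiltAux.FF_eq hp0 hq0 ha y).symm)
    -- the mean and the second moment
    have hmean : tiltMean μ p q α =
        (∫ x, DtiltAux.FF p q α x * Real.log (p x / q x) ∂μ) /
          (∫ x, DtiltAux.FF p q α x ∂μ) := by
      unfold tiltMean
      rw [integral_congr_ae (Filter.Eventually.of_forall (fun x => by
        rw [hqd α hαmem x]
        ring :
        ∀ x, qdens μ p q α x * Real.log (p x / q x) =
          (DtiltAux.FF p q α x * Real.log (p x / q x)) / ∫ y, DtiltAux.FF p q α y ∂μ))]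
      exact integral_div _ _
    have hm2 : (∫ x, qdens μ p q α x * (Real.log (p x / q x))^2 ∂μ) =
        (∫ x, DtiltAux.FF p q α x * (Real.log (p x / q x))^2 ∂μ) /
          (∫ x, DtiltAux.FF p q α x ∂μ) := by
      rw [integral_congr_ae (Filter.Eventually.of_forall (fun x => by
        rw [hqd α hαmem x]
        ring :
        ∀ x, qdens μ p q α x * (Real.log (p x / q x))^2 =
          (DtiltAux.FF p q α x * (Real.log (p x / q x))^2) / ∫ y, DtiltAux.FF p q α y ∂μ))]
      exact integral_div _ _
    -- identity for DtiltQ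
    have hDeq : ∀ a ∈ Set.Ioo (0:ℝ) 1, DtiltQ μ p q a =
        a * (∫ x, DtiltAux.FF p q a x * Real.log (p x / q x) ∂μ) /
          (∫ x, DtiltAux.FF p q a x ∂μ) -
        Real.log (∫ x, DtiltAux.FF p q a x ∂μ) := by
      intro a ha
      have hZa := hZpos a ha
      have hpt : ∀ x, qdens μ p q a x * Real.log (qdens μ p q a x / q x) =
          (a / ∫ y, DtiltAux.FF p q a y ∂μ) *
            (DtiltAux.FF p q a x * Real.log (p x / q x)) -
          (Real.log (∫ y, DtiltAux.FF p q a y ∂μ) / ∫ y, DtiltAux.FF p q a y ∂μ) *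
            DtiltAux.FF p q a x := by
        intro x
        rw [hqd a ha x]
        by_cases hx : x ∈ {y | 0 < p y ∧ 0 < q y}
        · have hqx : 0 < q x := hx.2
          have hFx : DtiltAux.FF p q a x = q x * Real.exp (a * Real.log (p x / q x)) :=
            Set.indicator_of_mem hx _
          rw [hFx]
          have h1 : q x * Real.exp (a * Real.log (p x / q x)) /
              (∫ y, DtiltAux.FF p q a y ∂μ) / q x =
              Real.exp (a * Real.log (p x / q x)) / (∫ y, DtiltAux.FF p q a y ∂μ) := by
            field_simp
          rw [h1, Real.log_div (Real.exp_ne_zero _) hZa.ne', Real.log_exp]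
          ring
        · have hFx : DtiltAux.FF p q a x = 0 := Set.indicator_of_notMem hx _
          rw [hFx]
          simp
      unfold DtiltQ
      rw [integral_congr_ae (Filter.Eventually.of_forall hpt),
        integral_sub ((hint1 a ha).const_mul _) ((hFint a ha).const_mul _),
        integral_const_mul, integral_const_mul]
      field_simp
    -- assemble the derivative
    have h1 : HasDerivAt (fun a => a * ∫ x, DtiltAux.FF p q a x * Real.log (p x / q x) ∂μ)
        (1 * (∫ x, DtiltAux.FF p q α x * Real.log (p x / q x) ∂μ) +
          α * ∫ x, DtiltAux.FF p q α x * (Real.log (p x / q x))^2 ∂μ) α :=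
      (hasDerivAt_id' α).mul hNd
    have h2 := h1.div hZd hZαpos.ne'
    have h3 := hZd.log hZαpos.ne'
    have hφ := h2.sub h3
    have hfinal := hφ.congr_of_eventuallyEq
      (Filter.eventuallyEq_of_mem (Ioo_mem_nhds hα0 hα1) fun a ha => hDeq a ha)
    refine hfinal.congr_deriv ?_
    symm
    unfold tiltVar
    rw [hm2, hmean]
    have hZne := hZαpos.ne'
    field_simp
    ring
end

section
/- Under the third-moment conditions, D(Q_α‖P) is twice differentiable in α ∈ (0,1), with d²/dα² D(Q_α‖P) = Var(L_α) − (1−α)·𝔼[(L_α − 𝔼L_α)³], where L_α = log(dP/dQ)(X^{(α)}) and X^{(α)} ∼ Q_α. -/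
open MeasureTheory Real Set

namespace TiltAux

variable {A : Type*} [MeasurableSpace A] {μ : Measure A} {p q : A → ℝ}

/-- `ℓ = log (p/q)`. -/
noncomputable def ell (p q : A → ℝ) (x : A) : ℝ := Real.log (p x / q x)

/-- Integrand of the `k`-th moment. -/
noncomputable def Fk (p q : A → ℝ) (k : ℕ) (a : ℝ) (x : A) : ℝ :=
  p x ^ a * q x ^ (1 - a) * ell p q x ^ k

/-- `k`-th (unnormalized) moment. -/
noncomputable def Zk (μ : Measure A) (p q : A → ℝ) (k : ℕ) (a : ℝ) : ℝ :=
  ∫ x, Fk p q k a x ∂μ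

lemma Zfun_eq (a : ℝ) : Zfun μ p q a = Zk μ p q 0 a := by
  simp [Zfun, Zk, Fk]

lemma ell_meas (hp : Measurable p) (hq : Measurable q) : Measurable (ell p q) :=
  Real.measurable_log.comp (hp.div hq)

lemma Fk_meas (hp : Measurable p) (hq : Measurable q) {a : ℝ} (ha : a ∈ Icc (0:ℝ) 1) (k : ℕ) :
    Measurable (Fk p q k a) := by
  have h1 : Measurable fun x => p x ^ a :=
    (Real.continuous_rpow_const ha.1).measurable.comp hp
  have h2 : Measurable fun x => q x ^ (1 - a) :=
    (Real.continuous_rpow_const (by linarith [ha.2])).measurable.comp hq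
  exact (h1.mul h2).mul ((ell_meas hp hq).pow_const k)

lemma F_nonneg (hp0 : ∀ x, 0 ≤ p x) (hq0 : ∀ x, 0 ≤ q x) (a : ℝ) (x : A) :
    0 ≤ p x ^ a * q x ^ (1 - a) :=
  mul_nonneg (Real.rpow_nonneg (hp0 x) _) (Real.rpow_nonneg (hq0 x) _)

lemma F_le (hp0 : ∀ x, 0 ≤ p x) (hq0 : ∀ x, 0 ≤ q x) {a : ℝ} (ha : a ∈ Ioo (0:ℝ) 1) (x : A) :
    p x ^ a * q x ^ (1 - a) ≤ p x + q x := by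
  have h1 : p x ^ a ≤ (p x + q x) ^ a :=
    Real.rpow_le_rpow (hp0 x) (by linarith [hq0 x]) ha.1.le
  have h2 : q x ^ (1 - a) ≤ (p x + q x) ^ (1 - a) :=
    Real.rpow_le_rpow (hq0 x) (by linarith [hp0 x]) (by linarith [ha.2])
  have hs : (0:ℝ) ≤ p x + q x := by linarith [hp0 x, hq0 x]
  calc p x ^ a * q x ^ (1 - a)
      ≤ (p x + q x) ^ a * (p x + q x) ^ (1 - a) :=
        mul_le_mul h1 h2 (Real.rpow_nonneg (hq0 x) _) (Real.rpow_nonneg hs _)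
    _ = p x + q x := by
        rcases eq_or_lt_of_le hs with h | h
        · rw [← h, Real.zero_rpow (ne_of_gt ha.1), zero_mul]
        · rw [← Real.rpow_add h, show a + (1 - a) = 1 by ring, Real.rpow_one]

lemma int_p (hpint : ∫ x, p x ∂μ = 1) : Integrable p μ := by
  by_contra h
  rw [integral_undef h] at hpint
  norm_num at hpint

lemma boundInt (hpint : ∫ x, p x ∂μ = 1) (hqint : ∫ x, q x ∂μ = 1)
    (hP3 : Integrable (fun x => p x * |Real.log (p x / q x)|^3) μ)
    (hQ3 : Integrable (fun x => q x * |Real.log (p x / q x)|^3) μ) :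
    Integrable (fun x => (p x + q x) * (1 + |ell p q x| ^ 3)) μ := by
  have h : (fun x => (p x + q x) * (1 + |ell p q x| ^ 3))
      = fun x => (p x + q x) + (p x * |Real.log (p x / q x)|^3 + q x * |Real.log (p x / q x)|^3) := by
    funext x; simp only [ell]; ring
  rw [h]
  exact ((int_p hpint).add (int_p hqint)).add (hP3.add hQ3)

lemma Fk_bound (hp0 : ∀ x, 0 ≤ p x) (hq0 : ∀ x, 0 ≤ q x) {a : ℝ} (ha : a ∈ Ioo (0:ℝ) 1)
    {k : ℕ} (hk : k ≤ 3) (x : A) :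
    ‖Fk p q k a x‖ ≤ (p x + q x) * (1 + |ell p q x| ^ 3) := by
  have hF0 := F_nonneg hp0 hq0 a x
  have h1 : ‖Fk p q k a x‖ = (p x ^ a * q x ^ (1 - a)) * |ell p q x| ^ k := by
    rw [Fk, Real.norm_eq_abs, abs_mul, abs_of_nonneg hF0, abs_pow]
  rw [h1]
  have h2 : |ell p q x| ^ k ≤ 1 + |ell p q x| ^ 3 := by
    rcases le_or_gt (|ell p q x|) 1 with h | h
    · calc |ell p q x| ^ k ≤ 1 := pow_le_one₀ (abs_nonneg _) h
        _ ≤ 1 + |ell p q x| ^ 3 := le_add_of_nonneg_right (pow_nonneg (abs_nonneg _) 3)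
    · calc |ell p q x| ^ k ≤ |ell p q x| ^ 3 := pow_le_pow_right₀ h.le hk
        _ ≤ 1 + |ell p q x| ^ 3 := le_add_of_nonneg_left zero_le_one
  exact mul_le_mul (F_le hp0 hq0 ha x) h2 (pow_nonneg (abs_nonneg _) k)
    (by linarith [hp0 x, hq0 x])

lemma Fk_int (hp : Measurable p) (hq : Measurable q)
    (hp0 : ∀ x, 0 ≤ p x) (hq0 : ∀ x, 0 ≤ q x)
    (hpint : ∫ x, p x ∂μ = 1) (hqint : ∫ x, q x ∂μ = 1)
    (hP3 : Integrable (fun x => p x * |Real.log (p x / q x)|^3) μ)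
    (hQ3 : Integrable (fun x => q x * |Real.log (p x / q x)|^3) μ)
    {a : ℝ} (ha : a ∈ Ioo (0:ℝ) 1) {k : ℕ} (hk : k ≤ 3) :
    Integrable (Fk p q k a) μ := by
  refine (boundInt hpint hqint hP3 hQ3).mono
    ((Fk_meas hp hq (Ioo_subset_Icc_self ha) k).aestronglyMeasurable)
    (ae_of_all _ fun x => ?_)
  exact (Fk_bound hp0 hq0 ha hk x).trans (le_abs_self _)

lemma hasDerivAt_F (hp0 : ∀ x, 0 ≤ p x) (hq0 : ∀ x, 0 ≤ q x) (x : A)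
    {a : ℝ} (ha : a ∈ Ioo (0:ℝ) 1) :
    HasDerivAt (fun b => p x ^ b * q x ^ (1 - b))
      (p x ^ a * q x ^ (1 - a) * ell p q x) a := by
  rcases eq_or_lt_of_le (hp0 x) with hpx | hpx
  · have hev : (fun b => p x ^ b * q x ^ (1 - b)) =ᶠ[nhds a] fun _ => (0:ℝ) := by
      filter_upwards [Ioo_mem_nhds ha.1 ha.2] with b hb
      rw [← hpx, Real.zero_rpow (ne_of_gt hb.1), zero_mul]
    have h0 : p x ^ a * q x ^ (1 - a) * ell p q x = 0 := by
      rw [← hpx, Real.zero_rpow (ne_of_gt ha.1), zero_mul, zero_mul]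
    rw [h0]
    exact (hasDerivAt_const a (0:ℝ)).congr_of_eventuallyEq hev
  rcases eq_or_lt_of_le (hq0 x) with hqx | hqx
  · have hev : (fun b => p x ^ b * q x ^ (1 - b)) =ᶠ[nhds a] fun _ => (0:ℝ) := by
      filter_upwards [Ioo_mem_nhds ha.1 ha.2] with b hb
      rw [← hqx, Real.zero_rpow (by have := hb.2; intro hcon; linarith [sub_eq_zero.mp hcon]), mul_zero]
    have h0 : p x ^ a * q x ^ (1 - a) * ell p q x = 0 := by
      rw [← hqx, Real.zero_rpow (by have := ha.2; intro hcon; linarith [sub_eq_zero.mp hcon]),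
        mul_zero, zero_mul]
    rw [h0]
    exact (hasDerivAt_const a (0:ℝ)).congr_of_eventuallyEq hev
  · have hder : HasDerivAt (fun b : ℝ => Real.log (p x) * b + Real.log (q x) * (1 - b))
        (Real.log (p x) - Real.log (q x)) a := by
      have h1 : HasDerivAt (fun b : ℝ => Real.log (p x) * b) (Real.log (p x)) a := by
        simpa using (hasDerivAt_id a).const_mul (Real.log (p x))
      have h2 : HasDerivAt (fun b : ℝ => Real.log (q x) * (1 - b)) (-Real.log (q x)) a := by
        simpa using ((hasDerivAt_const a (1:ℝ)).sub (hasDerivAt_id a)).const_mul (Real.log (q x))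
      have h3 := h1.add h2
      exact h3.congr_deriv (by ring)
    have hexp := hder.exp
    have hfun : (fun b : ℝ => p x ^ b * q x ^ (1 - b))
        = fun b => Real.exp (Real.log (p x) * b + Real.log (q x) * (1 - b)) := by
      funext b
      rw [Real.exp_add, Real.rpow_def_of_pos hpx, Real.rpow_def_of_pos hqx]
    rw [hfun]
    convert hexp using 1
    rw [Real.exp_add, ← Real.rpow_def_of_pos hpx, ← Real.rpow_def_of_pos hqx, ell,
      Real.log_div (ne_of_gt hpx) (ne_of_gt hqx)]

lemma hasDerivAt_Zk (hp : Measurable p) (hq : Measurable q)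
    (hp0 : ∀ x, 0 ≤ p x) (hq0 : ∀ x, 0 ≤ q x)
    (hpint : ∫ x, p x ∂μ = 1) (hqint : ∫ x, q x ∂μ = 1)
    (hP3 : Integrable (fun x => p x * |Real.log (p x / q x)|^3) μ)
    (hQ3 : Integrable (fun x => q x * |Real.log (p x / q x)|^3) μ)
    {k : ℕ} (hk : k + 1 ≤ 3) {a : ℝ} (ha : a ∈ Ioo (0:ℝ) 1) :
    HasDerivAt (Zk μ p q k) (Zk μ p q (k + 1) a) a := by
  have hε0 : 0 < min a (1 - a) := lt_min ha.1 (by linarith [ha.2])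
  have hball : Metric.ball a (min a (1 - a)) ⊆ Ioo (0:ℝ) 1 := by
    intro b hb
    rw [Metric.mem_ball, Real.dist_eq] at hb
    have h1 := (abs_lt.1 hb).1
    have h2 := (abs_lt.1 hb).2
    have h3 := min_le_left a (1 - a)
    have h4 := min_le_right a (1 - a)
    exact ⟨by linarith, by linarith⟩
  have key := hasDerivAt_integral_of_dominated_loc_of_deriv_le (μ := μ)
    (F := fun b x => Fk p q k b x) (F' := fun b x => Fk p q (k + 1) b x)
    (bound := fun x => (p x + q x) * (1 + |ell p q x| ^ 3)) (Metric.ball_mem_nhds a hε0)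
    (by
      filter_upwards [Ioo_mem_nhds ha.1 ha.2] with b hb
      exact (Fk_meas hp hq (Ioo_subset_Icc_self hb) k).aestronglyMeasurable)
    (Fk_int hp hq hp0 hq0 hpint hqint hP3 hQ3 ha (by omega))
    ((Fk_meas hp hq (Ioo_subset_Icc_self ha) (k + 1)).aestronglyMeasurable)
    (ae_of_all _ fun x b hb => Fk_bound hp0 hq0 (hball hb) hk x)
    (boundInt hpint hqint hP3 hQ3)
    (ae_of_all _ fun x b hb => by
      have h := (hasDerivAt_F hp0 hq0 x (hball hb)).mul_const (ell p q x ^ k)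
      exact h.congr_deriv (by simp only [Fk, pow_succ]; ring))
  exact key.2

lemma Zfun_nonneg (hp0 : ∀ x, 0 ≤ p x) (hq0 : ∀ x, 0 ≤ q x) (a : ℝ) :
    0 ≤ Zfun μ p q a :=
  integral_nonneg fun x => F_nonneg hp0 hq0 a x

lemma Z_zero_all (hp : Measurable p) (hq : Measurable q)
    (hp0 : ∀ x, 0 ≤ p x) (hq0 : ∀ x, 0 ≤ q x)
    (hpint : ∫ x, p x ∂μ = 1) (hqint : ∫ x, q x ∂μ = 1)
    (hP3 : Integrable (fun x => p x * |Real.log (p x / q x)|^3) μ)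
    (hQ3 : Integrable (fun x => q x * |Real.log (p x / q x)|^3) μ)
    {a b : ℝ} (ha : a ∈ Ioo (0:ℝ) 1) (hb : b ∈ Ioo (0:ℝ) 1)
    (hZ : Zfun μ p q a = 0) : Zfun μ p q b = 0 := by
  have hint : Integrable (fun x => p x ^ a * q x ^ (1 - a)) μ := by
    have h := Fk_int hp hq hp0 hq0 hpint hqint hP3 hQ3 ha (k := 0) (by omega)
    have he : Fk p q 0 a = fun x => p x ^ a * q x ^ (1 - a) := by
      funext x; simp [Fk]
    rwa [he] at h
  have h0 : (fun x => p x ^ a * q x ^ (1 - a)) =ᵐ[μ] 0 := by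
    rw [← integral_eq_zero_iff_of_nonneg (fun x => F_nonneg hp0 hq0 a x) hint]
    exact hZ
  have hb0 : (fun x => p x ^ b * q x ^ (1 - b)) =ᵐ[μ] 0 := by
    filter_upwards [h0] with x hx
    simp only [Pi.zero_apply] at hx ⊢
    rcases mul_eq_zero.1 hx with h | h
    · have hpz : p x = 0 := by
        by_contra hne
        exact absurd h (ne_of_gt (Real.rpow_pos_of_pos (lt_of_le_of_ne (hp0 x) (Ne.symm hne)) a))
      rw [hpz, Real.zero_rpow (ne_of_gt hb.1), zero_mul]
    · have hqz : q x = 0 := by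
        by_contra hne
        exact absurd h (ne_of_gt (Real.rpow_pos_of_pos (lt_of_le_of_ne (hq0 x) (Ne.symm hne)) _))
      rw [hqz, Real.zero_rpow (by have := hb.2; intro hcon; linarith [sub_eq_zero.mp hcon]), mul_zero]
  rw [Zfun, integral_congr_ae hb0]
  simp

/-- integral of `qdens * ℓ^k` in terms of `Zk` (no positivity needed). -/
lemma int_qdens_pow {k : ℕ} (a : ℝ) :
    ∫ x, qdens μ p q a x * Real.log (p x / q x) ^ k ∂μ = Zk μ p q k a / Zk μ p q 0 a := by
  have h : ∀ x, qdens μ p q a x * Real.log (p x / q x) ^ k = Fk p q k a x / Zfun μ p q a := by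
    intro x; simp only [qdens, Fk, ell]; ring
  simp only [h]
  rw [integral_div, ← Zfun_eq, Zk]

lemma tiltMean_eq (a : ℝ) : tiltMean μ p q a = Zk μ p q 1 a / Zk μ p q 0 a := by
  have h := int_qdens_pow (μ := μ) (p := p) (q := q) (k := 1) a
  simp only [pow_one] at h
  rw [tiltMean, h]

lemma tiltVar_eq (a : ℝ) :
    tiltVar μ p q a = Zk μ p q 2 a / Zk μ p q 0 a - (Zk μ p q 1 a / Zk μ p q 0 a)^2 := by
  rw [tiltVar, int_qdens_pow, tiltMean_eq]

lemma DtiltP_eq (hp0 : ∀ x, 0 ≤ p x) (hq0 : ∀ x, 0 ≤ q x) {a : ℝ} (ha : a ∈ Ioo (0:ℝ) 1)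
    (hZ : 0 < Zfun μ p q a)
    (hI0 : Integrable (Fk p q 0 a) μ) (hI1 : Integrable (Fk p q 1 a) μ) :
    DtiltP μ p q a
      = -(1-a) * (Zk μ p q 1 a / Zk μ p q 0 a) - Real.log (Zk μ p q 0 a) := by
  have hpt : ∀ x, qdens μ p q a x * Real.log (qdens μ p q a x / p x)
      = (-(1-a)) * (Fk p q 1 a x / Zfun μ p q a)
        + (-Real.log (Zfun μ p q a)) * (Fk p q 0 a x / Zfun μ p q a) := by
    intro x
    rcases eq_or_lt_of_le (hp0 x) with hpx | hpx
    · have h : p x ^ a = 0 := by rw [← hpx]; exact Real.zero_rpow (ne_of_gt ha.1)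
      simp [qdens, Fk, h]
    rcases eq_or_lt_of_le (hq0 x) with hqx | hqx
    · have h : q x ^ (1 - a) = 0 := by
        rw [← hqx]
        exact Real.zero_rpow (by intro hcon; have := ha.2; linarith [sub_eq_zero.mp hcon])
      simp [qdens, Fk, h]
    · have hpa : 0 < p x ^ a := Real.rpow_pos_of_pos hpx a
      have hqa : 0 < q x ^ (1 - a) := Real.rpow_pos_of_pos hqx _
      have hFpos : 0 < p x ^ a * q x ^ (1 - a) := mul_pos hpa hqa
      have hlog1 : Real.log ((p x ^ a * q x ^ (1 - a) / Zfun μ p q a) / p x)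
          = a * Real.log (p x) + (1 - a) * Real.log (q x)
            - Real.log (Zfun μ p q a) - Real.log (p x) := by
        rw [Real.log_div (by positivity) (ne_of_gt hpx),
          Real.log_div (ne_of_gt hFpos) (ne_of_gt hZ),
          Real.log_mul (ne_of_gt hpa) (ne_of_gt hqa), Real.log_rpow hpx, Real.log_rpow hqx]
      rw [qdens, hlog1]
      simp only [Fk, ell]
      rw [Real.log_div (ne_of_gt hpx) (ne_of_gt hqx)]
      ring
  rw [DtiltP]
  simp only [hpt]
  rw [integral_add ((hI1.div_const _).const_mul _) ((hI0.div_const _).const_mul _),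
    integral_const_mul, integral_const_mul, integral_div, integral_div]
  have e0 : (∫ x, Fk p q 0 a x ∂μ) = Zk μ p q 0 a := rfl
  have e1 : (∫ x, Fk p q 1 a x ∂μ) = Zk μ p q 1 a := rfl
  rw [e0, e1, Zfun_eq]
  have h1 : Zk μ p q 0 a ≠ 0 := by rw [← Zfun_eq]; exact ne_of_gt hZ
  rw [div_self h1]
  ring

lemma tiltM3_eq (hZ : 0 < Zfun μ p q a)
    (hI0 : Integrable (Fk p q 0 a) μ) (hI1 : Integrable (Fk p q 1 a) μ)
    (hI2 : Integrable (Fk p q 2 a) μ) (hI3 : Integrable (Fk p q 3 a) μ) :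
    tiltM3 μ p q a
      = Zk μ p q 3 a / Zk μ p q 0 a
        - 3 * (Zk μ p q 1 a / Zk μ p q 0 a) * (Zk μ p q 2 a / Zk μ p q 0 a)
        + 2 * (Zk μ p q 1 a / Zk μ p q 0 a)^3 := by
  have h1 : Zk μ p q 0 a ≠ 0 := by rw [← Zfun_eq]; exact ne_of_gt hZ
  have hpt : ∀ x, qdens μ p q a x * (Real.log (p x / q x) - tiltMean μ p q a)^3
      = Fk p q 3 a x / Zfun μ p q a
        + ((-(3 * (Zk μ p q 1 a / Zk μ p q 0 a))) * (Fk p q 2 a x / Zfun μ p q a)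
          + ((3 * (Zk μ p q 1 a / Zk μ p q 0 a)^2) * (Fk p q 1 a x / Zfun μ p q a)
            + (-((Zk μ p q 1 a / Zk μ p q 0 a)^3)) * (Fk p q 0 a x / Zfun μ p q a))) := by
    intro x
    rw [tiltMean_eq]
    simp only [qdens, Fk, ell]
    ring
  rw [tiltM3]
  simp only [hpt]
  have hf0 : Integrable (fun x => Fk p q 0 a x / Zfun μ p q a) μ := hI0.div_const _
  have hf1 : Integrable (fun x => Fk p q 1 a x / Zfun μ p q a) μ := hI1.div_const _
  have hf2 : Integrable (fun x => Fk p q 2 a x / Zfun μ p q a) μ := hI2.div_const _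
  have hf3 : Integrable (fun x => Fk p q 3 a x / Zfun μ p q a) μ := hI3.div_const _
  have hrest2 : Integrable (fun x =>
      3 * (Zk μ p q 1 a / Zk μ p q 0 a) ^ 2 * (Fk p q 1 a x / Zfun μ p q a)
        + -(Zk μ p q 1 a / Zk μ p q 0 a) ^ 3 * (Fk p q 0 a x / Zfun μ p q a)) μ :=
    (hf1.const_mul _).add (hf0.const_mul _)
  have hrest : Integrable (fun x =>
      -(3 * (Zk μ p q 1 a / Zk μ p q 0 a)) * (Fk p q 2 a x / Zfun μ p q a)
        + (3 * (Zk μ p q 1 a / Zk μ p q 0 a) ^ 2 * (Fk p q 1 a x / Zfun μ p q a)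
          + -(Zk μ p q 1 a / Zk μ p q 0 a) ^ 3 * (Fk p q 0 a x / Zfun μ p q a))) μ :=
    (hf2.const_mul _).add hrest2
  rw [integral_add hf3 hrest, integral_add (hf2.const_mul _) hrest2,
    integral_add (hf1.const_mul _) (hf0.const_mul _),
    integral_const_mul, integral_const_mul, integral_const_mul,
    integral_div, integral_div, integral_div, integral_div]
  have e0 : (∫ x, Fk p q 0 a x ∂μ) = Zk μ p q 0 a := rfl
  have e1 : (∫ x, Fk p q 1 a x ∂μ) = Zk μ p q 1 a := rfl
  have e2 : (∫ x, Fk p q 2 a x ∂μ) = Zk μ p q 2 a := rfl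
  have e3 : (∫ x, Fk p q 3 a x ∂μ) = Zk μ p q 3 a := rfl
  rw [e0, e1, e2, e3, Zfun_eq]
  field_simp
  ring

end TiltAux

theorem DtiltP_second_deriv {A : Type*} [MeasurableSpace A]
    (μ : Measure A) [SigmaFinite μ]
    (p q : A → ℝ) (hp : Measurable p) (hq : Measurable q)
    (hp0 : ∀ x, 0 ≤ p x) (hq0 : ∀ x, 0 ≤ q x)
    (hpint : ∫ x, p x ∂μ = 1) (hqint : ∫ x, q x ∂μ = 1)
    (hP3 : Integrable (fun x => p x * |Real.log (p x / q x)|^3) μ)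
    (hQ3 : Integrable (fun x => q x * |Real.log (p x / q x)|^3) μ) :
    ∀ α ∈ Set.Ioo (0:ℝ) 1,
      HasDerivAt (deriv (DtiltP μ p q))
        (tiltVar μ p q α - (1-α) * tiltM3 μ p q α) α := by
  intro α hα
  by_cases hzero : Zfun μ p q α = 0
  · -- degenerate case: Z ≡ 0 on (0,1)
    have hZ0 : ∀ a ∈ Ioo (0:ℝ) 1, Zfun μ p q a = 0 := fun a haa =>
      TiltAux.Z_zero_all hp hq hp0 hq0 hpint hqint hP3 hQ3 hα haa hzero
    have hqd : ∀ a ∈ Ioo (0:ℝ) 1, ∀ x, qdens μ p q a x = 0 := fun a haa x => by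
      rw [qdens, hZ0 a haa, div_zero]
    have hD : ∀ a ∈ Ioo (0:ℝ) 1, DtiltP μ p q a = 0 := by
      intro a haa
      rw [DtiltP]
      have h : ∀ x, qdens μ p q a x * Real.log (qdens μ p q a x / p x) = 0 := fun x => by
        rw [hqd a haa x, zero_mul]
      simp only [h, integral_zero]
    have hMean : tiltMean μ p q α = 0 := by
      rw [tiltMean]
      have h : ∀ x, qdens μ p q α x * Real.log (p x / q x) = 0 := fun x => by
        rw [hqd α hα x, zero_mul]
      simp only [h, integral_zero]
    have hVar : tiltVar μ p q α = 0 := by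
      rw [tiltVar, hMean]
      have h : ∀ x, qdens μ p q α x * (Real.log (p x / q x))^2 = 0 := fun x => by
        rw [hqd α hα x, zero_mul]
      simp only [h, integral_zero]
      norm_num
    have hM3 : tiltM3 μ p q α = 0 := by
      rw [tiltM3]
      have h : ∀ x, qdens μ p q α x * (Real.log (p x / q x) - tiltMean μ p q α)^3 = 0 :=
        fun x => by rw [hqd α hα x, zero_mul]
      simp only [h, integral_zero]
    rw [hVar, hM3]
    have hzero' : deriv (DtiltP μ p q) =ᶠ[nhds α] fun _ => (0:ℝ) := by
      filter_upwards [Ioo_mem_nhds hα.1 hα.2] with b hb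
      have hev : DtiltP μ p q =ᶠ[nhds b] fun _ => (0:ℝ) := by
        filter_upwards [Ioo_mem_nhds hb.1 hb.2] with c hc
        exact hD c hc
      rw [hev.deriv_eq, deriv_const]
    have h := (hasDerivAt_const α (0:ℝ)).congr_of_eventuallyEq hzero'
    simpa using h
  · -- nondegenerate case
    have hZpos : ∀ a ∈ Ioo (0:ℝ) 1, 0 < Zfun μ p q a := by
      intro a haa
      rcases eq_or_lt_of_le (TiltAux.Zfun_nonneg hp0 hq0 a) with h | h
      · exact absurd (TiltAux.Z_zero_all hp hq hp0 hq0 hpint hqint hP3 hQ3 haa hα h.symm) hzero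
      · exact h
    have hzne : ∀ a ∈ Ioo (0:ℝ) 1, TiltAux.Zk μ p q 0 a ≠ 0 := fun a haa => by
      rw [← TiltAux.Zfun_eq]; exact (hZpos a haa).ne'
    have hIk : ∀ a ∈ Ioo (0:ℝ) 1, ∀ k ≤ 3, Integrable (TiltAux.Fk p q k a) μ :=
      fun a haa k hk => TiltAux.Fk_int hp hq hp0 hq0 hpint hqint hP3 hQ3 haa hk
    have hD : ∀ a ∈ Ioo (0:ℝ) 1, DtiltP μ p q a
        = -(1-a) * (TiltAux.Zk μ p q 1 a / TiltAux.Zk μ p q 0 a)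
          - Real.log (TiltAux.Zk μ p q 0 a) := fun a haa =>
      TiltAux.DtiltP_eq hp0 hq0 haa (hZpos a haa) (hIk a haa 0 (by omega)) (hIk a haa 1 (by omega))
    have hcb : ∀ b : ℝ, HasDerivAt (fun c : ℝ => -(1-c)) 1 b := fun b => by
      exact ((hasDerivAt_const b (1:ℝ)).sub (hasDerivAt_id b)).neg.congr_deriv (by norm_num)
    have hderiv_eq : ∀ b ∈ Ioo (0:ℝ) 1, deriv (DtiltP μ p q) b
        = -(1-b) * (TiltAux.Zk μ p q 2 b / TiltAux.Zk μ p q 0 b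
            - (TiltAux.Zk μ p q 1 b / TiltAux.Zk μ p q 0 b)^2) := by
      intro b hb
      have hev : DtiltP μ p q =ᶠ[nhds b] (fun a =>
          -(1-a) * (TiltAux.Zk μ p q 1 a / TiltAux.Zk μ p q 0 a)
            - Real.log (TiltAux.Zk μ p q 0 a)) := by
        filter_upwards [Ioo_mem_nhds hb.1 hb.2] with c hc
        exact hD c hc
      rw [hev.deriv_eq]
      have h0 := TiltAux.hasDerivAt_Zk hp hq hp0 hq0 hpint hqint hP3 hQ3 (k := 0) (by omega) hb
      have h1 := TiltAux.hasDerivAt_Zk hp hq hp0 hq0 hpint hqint hP3 hQ3 (k := 1) (by omega) hb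
      have hne := hzne b hb
      have hmd := h1.div h0 hne
      have hlog := h0.log hne
      have hfin := ((hcb b).mul hmd).sub hlog
      erw [hfin.deriv]
      simp only [Pi.sub_apply, Pi.div_apply, Pi.pow_apply]
      field_simp
      ring
    have h0 := TiltAux.hasDerivAt_Zk hp hq hp0 hq0 hpint hqint hP3 hQ3 (k := 0) (by omega) hα
    have h1 := TiltAux.hasDerivAt_Zk hp hq hp0 hq0 hpint hqint hP3 hQ3 (k := 1) (by omega) hα
    have h2 := TiltAux.hasDerivAt_Zk hp hq hp0 hq0 hpint hqint hP3 hQ3 (k := 2) (by omega) hα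
    have hne := hzne α hα
    have hq2 := h2.div h0 hne
    have hq1 := h1.div h0 hne
    have hv := hq2.sub (hq1.pow 2)
    have hfin := (hcb α).mul hv
    have hev2 : deriv (DtiltP μ p q) =ᶠ[nhds α] (fun c =>
        -(1-c) * (TiltAux.Zk μ p q 2 c / TiltAux.Zk μ p q 0 c
          - (TiltAux.Zk μ p q 1 c / TiltAux.Zk μ p q 0 c)^2)) := by
      filter_upwards [Ioo_mem_nhds hα.1 hα.2] with c hc
      exact hderiv_eq c hc
    have H := hfin.congr_of_eventuallyEq hev2
    refine H.congr_deriv ?_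
    simp only [Pi.sub_apply, Pi.div_apply, Pi.pow_apply, Nat.cast_ofNat, show (2:ℕ) - 1 = 1 from rfl, pow_one]
    rw [TiltAux.tiltVar_eq,
      TiltAux.tiltM3_eq (hZpos α hα) (hIk α hα 0 (by omega)) (hIk α hα 1 (by omega))
        (hIk α hα 2 (by omega)) (hIk α hα 3 (by omega))]
    field_simp
    ring
end

section
/- Let 0 < δ < D(Q‖P), α* ∈ (0,1) with D(Q_{α*}‖P) = δ, and suppose σ₀² := inf_{α∈(0,1)} Var(log(dP/dQ)(X^{(α)})) > 0 and ρ₀ := sup_{α∈(0,1)} 𝔼|log(dP/dQ)(X^{(α)}) − 𝔼 log(dP/dQ)(X^{(α)})|³ < ∞. Then for α ∈ (α*, 1), the second-order Taylor bound D(Q_α‖P) ≤ D(Q_{α*}‖P) − (α−α*)(1−α*)σ*² + (1/2)(α−α*)²(σ*² + 2ρ₀) holds, where σ*² = Var(log(dP/dQ)(X^{(α*)})). -/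
open MeasureTheory Real Set

set_option linter.unusedSectionVars false
set_option maxHeartbeats 1000000

section TaylorAux
variable {A : Type*} [MeasurableSpace A] {μ : Measure A} {p q : A → ℝ}

noncomputable def gfun (p q : A → ℝ) (a : ℝ) (x : A) : ℝ := p x ^ a * q x ^ (1-a)
noncomputable def LLR (p q : A → ℝ) (x : A) : ℝ := Real.log (p x / q x)
noncomputable def Zk (μ : Measure A) (p q : A → ℝ) (k : ℕ) (a : ℝ) : ℝ :=
  ∫ x, gfun p q a x * LLR p q x ^ k ∂μ

lemma integral_add4' {f3 f2 f1 f0 : A → ℝ}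
    (h3 : Integrable f3 μ) (h2 : Integrable f2 μ) (h1 : Integrable f1 μ) (h0 : Integrable f0 μ) :
    ∫ x, f3 x + f2 x + f1 x + f0 x ∂μ
      = (∫ x, f3 x ∂μ) + (∫ x, f2 x ∂μ) + (∫ x, f1 x ∂μ) + (∫ x, f0 x ∂μ) := by
  rw [integral_add (f := fun x => f3 x + f2 x + f1 x) (g := f0) ((h3.add h2).add h1) h0,
    integral_add (f := fun x => f3 x + f2 x) (g := f1) (h3.add h2) h1,
    integral_add h3 h2]

lemma gfun_nonneg (hp0 : ∀ x, 0 ≤ p x) (hq0 : ∀ x, 0 ≤ q x) (a : ℝ) (x : A) :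
    0 ≤ gfun p q a x :=
  mul_nonneg (Real.rpow_nonneg (hp0 x) _) (Real.rpow_nonneg (hq0 x) _)

lemma gfun_le (hp0 : ∀ x, 0 ≤ p x) (hq0 : ∀ x, 0 ≤ q x) {a : ℝ}
    (ha : a ∈ Set.Icc (0:ℝ) 1) (x : A) : gfun p q a x ≤ p x + q x := by
  have h := Real.geom_mean_le_arith_mean2_weighted ha.1 (by linarith [ha.2] : (0:ℝ) ≤ 1 - a)
    (hp0 x) (hq0 x) (by ring)
  refine h.trans ?_
  nlinarith [hp0 x, hq0 x, ha.1, ha.2]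

lemma abs_pow_le (k : ℕ) (hk : k ≤ 3) (y : ℝ) : |y|^k ≤ 1 + |y|^3 := by
  rcases le_or_gt (|y|) 1 with h | h
  · calc |y|^k ≤ 1 := pow_le_one₀ (abs_nonneg y) h
    _ ≤ 1 + |y|^3 := by nlinarith [pow_nonneg (abs_nonneg y) 3]
  · have h1 : (1:ℝ) ≤ |y| := h.le
    calc |y|^k ≤ |y|^3 := pow_le_pow_right₀ h1 hk
    _ ≤ 1 + |y|^3 := by linarith

lemma bound_pointwise (hp0 : ∀ x, 0 ≤ p x) (hq0 : ∀ x, 0 ≤ q x) {k : ℕ} (hk : k ≤ 3)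
    {a : ℝ} (ha : a ∈ Set.Icc (0:ℝ) 1) (x : A) :
    |gfun p q a x * LLR p q x ^ k| ≤ (p x + q x) * (1 + |LLR p q x|^3) := by
  rw [abs_mul, abs_of_nonneg (gfun_nonneg hp0 hq0 a x), abs_pow]
  have h1 := gfun_le hp0 hq0 ha x
  have h2 := abs_pow_le k hk (LLR p q x)
  have h3 : (0:ℝ) ≤ |LLR p q x|^k := pow_nonneg (abs_nonneg _) k
  have h4 := gfun_nonneg hp0 hq0 a x
  nlinarith [abs_nonneg (LLR p q x), pow_nonneg (abs_nonneg (LLR p q x)) 3]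

lemma gfun_hasDerivAt {x : A} (hp0 : 0 ≤ p x) (hq0 : 0 ≤ q x) {a : ℝ}
    (ha : a ∈ Set.Ioo (0:ℝ) 1) :
    HasDerivAt (fun t => gfun p q t x) (gfun p q a x * LLR p q x) a := by
  rcases eq_or_lt_of_le hp0 with hp | hp
  · have hz : ∀ t ∈ Set.Ioo (0:ℝ) 1, gfun p q t x = 0 := by
      intro t ht
      simp [gfun, ← hp, Real.zero_rpow (ne_of_gt ht.1)]
    have : HasDerivAt (fun _ : ℝ => (0:ℝ)) 0 a := hasDerivAt_const a 0
    have heq : (fun t => gfun p q t x) =ᶠ[nhds a] fun _ => (0:ℝ) := by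
      filter_upwards [isOpen_Ioo.mem_nhds ha] with t ht
      exact hz t ht
    rw [hz a ha, zero_mul]
    exact this.congr_of_eventuallyEq heq
  rcases eq_or_lt_of_le hq0 with hq | hq
  · have hz : ∀ t ∈ Set.Ioo (0:ℝ) 1, gfun p q t x = 0 := by
      intro t ht
      have : (1:ℝ) - t ≠ 0 := by have := ht.2; intro h; linarith [ht.2]
      simp [gfun, ← hq, Real.zero_rpow this]
    have : HasDerivAt (fun _ : ℝ => (0:ℝ)) 0 a := hasDerivAt_const a 0
    have heq : (fun t => gfun p q t x) =ᶠ[nhds a] fun _ => (0:ℝ) := by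
      filter_upwards [isOpen_Ioo.mem_nhds ha] with t ht
      exact hz t ht
    rw [hz a ha, zero_mul]
    exact this.congr_of_eventuallyEq heq
  · have hrep : ∀ t : ℝ, gfun p q t x = Real.exp (t * Real.log (p x) + (1-t) * Real.log (q x)) := by
      intro t
      rw [gfun, Real.rpow_def_of_pos hp, Real.rpow_def_of_pos hq, ← Real.exp_add]
      ring_nf
    have hL : LLR p q x = Real.log (p x) - Real.log (q x) := by
      rw [LLR, Real.log_div (ne_of_gt hp) (ne_of_gt hq)]
    have h1 : HasDerivAt (fun t : ℝ => t * Real.log (p x) + (1-t) * Real.log (q x))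
        (Real.log (p x) - Real.log (q x)) a := by
      have := ((hasDerivAt_id a).mul_const (Real.log (p x))).add
        (((hasDerivAt_const a (1:ℝ)).sub (hasDerivAt_id a)).mul_const (Real.log (q x)))
      exact this.congr_deriv (by ring)
    have h2 := h1.exp
    have : HasDerivAt (fun t => gfun p q t x)
        (Real.exp (a * Real.log (p x) + (1-a) * Real.log (q x))
          * (Real.log (p x) - Real.log (q x))) a := by
      refine HasDerivAt.congr_of_eventuallyEq ?_ (Filter.Eventually.of_forall hrep)
      simpa [mul_comm] using h2
    rw [hrep a, hL]
    exact this

variable (hp : Measurable p) (hq : Measurable q)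
  (hp0 : ∀ x, 0 ≤ p x) (hq0 : ∀ x, 0 ≤ q x)
  (hdom : Integrable (fun x => (p x + q x) * (1 + |LLR p q x|^3)) μ)

include hp hq hp0 hq0 hdom

lemma integrable_gL (k : ℕ) (hk : k ≤ 3) {a : ℝ} (ha : a ∈ Set.Icc (0:ℝ) 1) :
    Integrable (fun x => gfun p q a x * LLR p q x ^ k) μ := by
  refine Integrable.mono' hdom ?_ ?_
  · exact (((hp.pow_const a).mul (hq.pow_const (1-a))).mul
      (((hp.div hq).log).pow_const k)).aestronglyMeasurable
  · exact Filter.Eventually.of_forall fun x => by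
      rw [Real.norm_eq_abs]; exact bound_pointwise hp0 hq0 hk ha x

lemma hasDerivAt_Zk (k : ℕ) (hk : k ≤ 2) {a : ℝ} (ha : a ∈ Set.Ioo (0:ℝ) 1) :
    HasDerivAt (fun t => Zk μ p q k t) (Zk μ p q (k+1) a) a := by
  set ε := min a (1-a) with hε
  have hεpos : 0 < ε := lt_min ha.1 (by linarith [ha.2])
  have hball : Metric.ball a ε ⊆ Set.Ioo (0:ℝ) 1 := by
    intro t ht
    rw [Metric.mem_ball, Real.dist_eq] at ht
    constructor
    · have := min_le_left a (1-a); cases abs_lt.1 ht; linarith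
    · have := min_le_right a (1-a); cases abs_lt.1 ht; linarith
  have key := hasDerivAt_integral_of_dominated_loc_of_deriv_le (μ := μ)
    (F := fun t x => gfun p q t x * LLR p q x ^ k)
    (F' := fun t x => gfun p q t x * LLR p q x ^ (k+1))
    (bound := fun x => (p x + q x) * (1 + |LLR p q x|^3))
    (Metric.ball_mem_nhds a hεpos)
    (Filter.Eventually.of_forall fun t =>
      ((((hp.pow_const t).mul (hq.pow_const (1-t))).mul
        (((hp.div hq).log).pow_const k)).aestronglyMeasurable))
    (integrable_gL hp hq hp0 hq0 hdom k (by omega) (Set.mem_Icc_of_Ioo ha))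
    ((((hp.pow_const a).mul (hq.pow_const (1-a))).mul
        (((hp.div hq).log).pow_const (k+1))).aestronglyMeasurable)
    (Filter.Eventually.of_forall fun x => fun t ht => by
      rw [Real.norm_eq_abs]
      exact bound_pointwise hp0 hq0 (k := k+1) (by omega)
        (Set.mem_Icc_of_Ioo (hball ht)) x)
    hdom
    (Filter.Eventually.of_forall fun x => fun t ht => ?_)
  · exact key.2
  · have h := (gfun_hasDerivAt (hp0 x) (hq0 x) (hball ht)).mul_const (LLR p q x ^ k)
    have heq : gfun p q t x * LLR p q x * LLR p q x ^ k = gfun p q t x * LLR p q x ^ (k+1) := by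
      rw [pow_succ]; ring
    rw [heq] at h
    exact h

omit hp hq hp0 hq0 hdom

lemma Zfun_eq_Zk (a : ℝ) : Zfun μ p q a = Zk μ p q 0 a := by
  simp [Zfun, Zk, gfun]

lemma qdens_eq (a : ℝ) (x : A) : qdens μ p q a x = gfun p q a x / Zfun μ p q a := rfl

lemma gfun_eq_zero_iff (hp0 : ∀ x, 0 ≤ p x) (hq0 : ∀ x, 0 ≤ q x) {a : ℝ}
    (ha : a ∈ Set.Ioo (0:ℝ) 1) (x : A) :
    gfun p q a x = 0 ↔ (p x = 0 ∨ q x = 0) := by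
  rw [gfun, mul_eq_zero, Real.rpow_eq_zero (hp0 x) (ne_of_gt ha.1),
    Real.rpow_eq_zero (hq0 x) (by have := ha.2; intro h; linarith)]

include hp hq hp0 hq0 hdom

lemma Z_zero_all {b : ℝ} (hb : b ∈ Set.Ioo (0:ℝ) 1) (hZb : Zfun μ p q b = 0)
    {a : ℝ} (ha : a ∈ Set.Ioo (0:ℝ) 1) : Zfun μ p q a = 0 := by
  have hint : Integrable (fun x => gfun p q b x) μ := by
    simpa using integrable_gL hp hq hp0 hq0 hdom 0 (by norm_num) (Set.mem_Icc_of_Ioo hb)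
  have h0 : (fun x => gfun p q b x) =ᶠ[ae μ] 0 := by
    rw [← integral_eq_zero_iff_of_nonneg (fun x => gfun_nonneg hp0 hq0 b x) hint]
    simpa [Zfun_eq_Zk, Zk, pow_zero, mul_one] using hZb
  have h1 : (fun x => gfun p q a x) =ᶠ[ae μ] 0 := by
    filter_upwards [h0] with x hx
    have := (gfun_eq_zero_iff hp0 hq0 hb x).1 hx
    exact (gfun_eq_zero_iff hp0 hq0 ha x).2 this
  calc Zfun μ p q a = ∫ x, gfun p q a x ∂μ := by simp [Zfun, gfun]
  _ = ∫ x, (0:ℝ) ∂μ := integral_congr_ae h1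
  _ = 0 := integral_zero _ _

lemma tiltMean_eq {a : ℝ} (ha : a ∈ Set.Ioo (0:ℝ) 1) :
    tiltMean μ p q a = Zk μ p q 1 a / Zfun μ p q a := by
  rw [tiltMean]
  have : ∀ x, qdens μ p q a x * Real.log (p x / q x)
      = (gfun p q a x * LLR p q x ^ 1) / Zfun μ p q a := by
    intro x; rw [qdens_eq]; simp [LLR, gfun]; ring
  simp_rw [this]
  rw [integral_div]
  rfl

lemma tiltM2_eq {a : ℝ} (ha : a ∈ Set.Ioo (0:ℝ) 1) :
    (∫ x, qdens μ p q a x * (Real.log (p x / q x))^2 ∂μ) = Zk μ p q 2 a / Zfun μ p q a := by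
  have : ∀ x, qdens μ p q a x * (Real.log (p x / q x))^2
      = (gfun p q a x * LLR p q x ^ 2) / Zfun μ p q a := by
    intro x; rw [qdens_eq]; simp [LLR, gfun]; ring
  simp_rw [this]
  rw [integral_div]
  rfl

lemma tiltVar_eq {a : ℝ} (ha : a ∈ Set.Ioo (0:ℝ) 1) :
    tiltVar μ p q a = Zk μ p q 2 a / Zfun μ p q a - (Zk μ p q 1 a / Zfun μ p q a)^2 := by
  rw [tiltVar, tiltM2_eq hp hq hp0 hq0 hdom ha, tiltMean_eq hp hq hp0 hq0 hdom ha]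

lemma DtiltP_eq {a : ℝ} (ha : a ∈ Set.Ioo (0:ℝ) 1) (hZ : 0 < Zfun μ p q a) :
    DtiltP μ p q a = -(1-a) * (Zk μ p q 1 a / Zfun μ p q a) - Real.log (Zfun μ p q a) := by
  set Z := Zfun μ p q a with hZdef
  have key : ∀ x, qdens μ p q a x * Real.log (qdens μ p q a x / p x)
      = (-(1-a)/Z) * (gfun p q a x * LLR p q x ^ 1)
        + (-(Real.log Z)/Z) * (gfun p q a x * LLR p q x ^ 0) := by
    intro x
    rcases eq_or_lt_of_le (hp0 x) with hpx | hpx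
    · have hg : gfun p q a x = 0 := (gfun_eq_zero_iff hp0 hq0 ha x).2 (Or.inl hpx.symm)
      rw [qdens_eq, hg]
      simp
    rcases eq_or_lt_of_le (hq0 x) with hqx | hqx
    · have hg : gfun p q a x = 0 := (gfun_eq_zero_iff hp0 hq0 ha x).2 (Or.inr hqx.symm)
      rw [qdens_eq, hg]
      simp
    · have hg : 0 < gfun p q a x :=
        mul_pos (Real.rpow_pos_of_pos hpx _) (Real.rpow_pos_of_pos hqx _)
      have hqd : 0 < qdens μ p q a x := div_pos hg hZ
      have hlg : Real.log (gfun p q a x) = a * Real.log (p x) + (1-a) * Real.log (q x) := by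
        rw [gfun, Real.log_mul (ne_of_gt (Real.rpow_pos_of_pos hpx _))
          (ne_of_gt (Real.rpow_pos_of_pos hqx _)),
          Real.log_rpow hpx, Real.log_rpow hqx]
      have hL : LLR p q x = Real.log (p x) - Real.log (q x) := by
        rw [LLR, Real.log_div (ne_of_gt hpx) (ne_of_gt hqx)]
      have hlog : Real.log (qdens μ p q a x / p x)
          = -(1-a) * LLR p q x - Real.log Z := by
        rw [Real.log_div (ne_of_gt hqd) (ne_of_gt hpx), qdens_eq,
          Real.log_div (ne_of_gt hg) (ne_of_gt hZ), hlg, hL]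
        ring
      rw [hlog, qdens_eq]
      rw [pow_one, pow_zero, mul_one]
      field_simp
      simp only [← hZdef, mul_inv_cancel_right₀ hZ.ne']
      rw [mul_div_assoc, div_self hZ.ne', mul_one]
      ring
  rw [DtiltP]
  simp_rw [key]
  rw [integral_add (f := fun x => -(1-a)/Z * (gfun p q a x * LLR p q x ^ 1))
      (g := fun x => -(Real.log Z)/Z * (gfun p q a x * LLR p q x ^ 0))
      ((integrable_gL hp hq hp0 hq0 hdom 1 (by norm_num) (Set.mem_Icc_of_Ioo ha)).const_mul _)
      ((integrable_gL hp hq hp0 hq0 hdom 0 (by norm_num) (Set.mem_Icc_of_Ioo ha)).const_mul _),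
    integral_const_mul, integral_const_mul]
  have hZ0 : (∫ x, gfun p q a x * LLR p q x ^ 0 ∂μ) = Z := by
    simp [hZdef, Zfun, gfun]
  rw [hZ0]
  show -(1 - a) / Z * Zk μ p q 1 a + -Real.log Z / Z * Z = _
  field_simp
  ring

lemma tiltM3_eq {a : ℝ} (ha : a ∈ Set.Ioo (0:ℝ) 1) (hZ : 0 < Zfun μ p q a) :
    tiltM3 μ p q a = Zk μ p q 3 a / Zfun μ p q a
      - 3*(Zk μ p q 2 a / Zfun μ p q a)*(Zk μ p q 1 a / Zfun μ p q a)
      + 2*(Zk μ p q 1 a / Zfun μ p q a)^3 := by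
  set Z := Zfun μ p q a with hZdef
  set m := tiltMean μ p q a with hm
  have key : ∀ x, qdens μ p q a x * (Real.log (p x / q x) - m)^3
      = (1/Z) * (gfun p q a x * LLR p q x ^ 3)
        + (-(3*m)/Z) * (gfun p q a x * LLR p q x ^ 2)
        + ((3*m^2)/Z) * (gfun p q a x * LLR p q x ^ 1)
        + (-(m^3)/Z) * (gfun p q a x * LLR p q x ^ 0) := by
    intro x
    rw [qdens_eq]
    show gfun p q a x / Z * (LLR p q x - m)^3 = _
    field_simp
    ring
  rw [tiltM3, ← hm]
  simp_rw [key]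
  rw [integral_add4'
      ((integrable_gL hp hq hp0 hq0 hdom 3 (by norm_num) (Set.mem_Icc_of_Ioo ha)).const_mul _)
      ((integrable_gL hp hq hp0 hq0 hdom 2 (by norm_num) (Set.mem_Icc_of_Ioo ha)).const_mul _)
      ((integrable_gL hp hq hp0 hq0 hdom 1 (by norm_num) (Set.mem_Icc_of_Ioo ha)).const_mul _)
      ((integrable_gL hp hq hp0 hq0 hdom 0 (by norm_num) (Set.mem_Icc_of_Ioo ha)).const_mul _),
    integral_const_mul, integral_const_mul, integral_const_mul, integral_const_mul]
  have hZ0 : (∫ x, gfun p q a x * LLR p q x ^ 0 ∂μ) = Z := by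
    simp [hZdef, Zfun, gfun]
  rw [hZ0]
  have hmZ : m = Zk μ p q 1 a / Z := tiltMean_eq hp hq hp0 hq0 hdom ha
  show 1/Z * Zk μ p q 3 a + -(3*m)/Z * Zk μ p q 2 a + 3*m^2/Z * Zk μ p q 1 a
      + -(m^3)/Z * Z = _
  rw [hmZ]
  field_simp
  ring

omit hp hq hdom

lemma tiltM3abs_nonneg (a : ℝ) (hZ : 0 ≤ Zfun μ p q a) : 0 ≤ tiltM3abs μ p q a := by
  apply integral_nonneg
  intro x
  have : 0 ≤ qdens μ p q a x := div_nonneg (gfun_nonneg hp0 hq0 a x) hZ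
  positivity

lemma abs_tiltM3_le (a : ℝ) (hZ : 0 ≤ Zfun μ p q a) :
    |tiltM3 μ p q a| ≤ tiltM3abs μ p q a := by
  rw [tiltM3, tiltM3abs]
  have := norm_integral_le_integral_norm
    (fun x => qdens μ p q a x * (Real.log (p x / q x) - tiltMean μ p q a)^3) (μ := μ)
  refine (le_of_le_of_eq (le_of_eq (Real.norm_eq_abs _).symm) rfl).trans <| this.trans
    (le_of_eq (integral_congr_ae (Filter.Eventually.of_forall fun x => ?_)))
  have h0 : 0 ≤ qdens μ p q a x := div_nonneg (gfun_nonneg hp0 hq0 a x) hZ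
  show ‖_‖ = _
  rw [Real.norm_eq_abs, abs_mul, abs_of_nonneg h0, abs_pow]

omit hp0 hq0

section Alg
variable {z0 z1 z2 z3 : ℝ → ℝ} {a : ℝ}

lemma hasDerivAt_Vabs (h0 : HasDerivAt z0 (z1 a) a) (h1 : HasDerivAt z1 (z2 a) a)
    (h2 : HasDerivAt z2 (z3 a) a) (hz : z0 a ≠ 0) :
    HasDerivAt (fun t => z2 t / z0 t - (z1 t / z0 t)^2)
      (z3 a / z0 a - 3*(z2 a / z0 a)*(z1 a / z0 a) + 2*(z1 a / z0 a)^3) a := by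
  have hm := (h1.div h0 hz)
  have := (h2.div h0 hz).sub (hm.pow 2)
  refine this.congr_deriv ?_
  simp only [Pi.div_apply, show (2:ℕ) - 1 = 1 from rfl, pow_one]
  field_simp
  ring

lemma hasDerivAt_Fabs (h0 : HasDerivAt z0 (z1 a) a) (h1 : HasDerivAt z1 (z2 a) a)
    (hz : 0 < z0 a) :
    HasDerivAt (fun t => -(1-t) * (z1 t / z0 t) - Real.log (z0 t))
      (-(1-a) * (z2 a / z0 a - (z1 a / z0 a)^2)) a := by
  have hm := h1.div h0 hz.ne'
  have hc : HasDerivAt (fun t : ℝ => -(1-t)) 1 a := by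
    exact (((hasDerivAt_const a (1:ℝ)).sub (hasDerivAt_id a)).neg).congr_deriv (by norm_num)
  have hlog := h0.log hz.ne'
  have := (hc.mul hm).sub hlog
  refine this.congr_deriv ?_
  simp only [Pi.div_apply]
  field_simp
  ring

lemma hasDerivAt_F'abs (h0 : HasDerivAt z0 (z1 a) a) (h1 : HasDerivAt z1 (z2 a) a)
    (h2 : HasDerivAt z2 (z3 a) a) (hz : z0 a ≠ 0) :
    HasDerivAt (fun t => -(1-t) * (z2 t / z0 t - (z1 t / z0 t)^2))
      ((z2 a / z0 a - (z1 a / z0 a)^2)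
        - (1-a) * (z3 a / z0 a - 3*(z2 a / z0 a)*(z1 a / z0 a) + 2*(z1 a / z0 a)^3)) a := by
  have hV := hasDerivAt_Vabs h0 h1 h2 hz
  have hc : HasDerivAt (fun t : ℝ => -(1-t)) 1 a := by
    exact (((hasDerivAt_const a (1:ℝ)).sub (hasDerivAt_id a)).neg).congr_deriv (by norm_num)
  have := hc.mul hV
  refine this.congr_deriv ?_
  ring
end Alg

end TaylorAux

theorem tilted_taylor_upper_bound {A : Type*} [MeasurableSpace A]
    (μ : Measure A) [SigmaFinite μ]
    (p q : A → ℝ) (hp : Measurable p) (hq : Measurable q)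
    (hp0 : ∀ x, 0 ≤ p x) (hq0 : ∀ x, 0 ≤ q x)
    (hpint : ∫ x, p x ∂μ = 1) (hqint : ∫ x, q x ∂μ = 1)
    (hP3 : Integrable (fun x => p x * |Real.log (p x / q x)|^3) μ)
    (hQ3 : Integrable (fun x => q x * |Real.log (p x / q x)|^3) μ)
    (δ : ℝ) (hδ0 : 0 < δ) (hδ : δ < ∫ x, q x * Real.log (q x / p x) ∂μ)
    (αs : ℝ) (hαs : αs ∈ Set.Ioo (0:ℝ) 1) (hαδ : DtiltP μ p q αs = δ)
    (σs : ℝ) (hσs : σs^2 = tiltVar μ p q αs)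
    (σ0sq ρ0 : ℝ) (hσ0pos : 0 < σ0sq)
    (hσ0 : IsGLB ((fun a => tiltVar μ p q a) '' Set.Ioo (0:ℝ) 1) σ0sq)
    (hρ0 : IsLUB ((fun a => tiltM3abs μ p q a) '' Set.Ioo (0:ℝ) 1) ρ0) :
    ∀ α ∈ Set.Ioo αs 1,
      DtiltP μ p q α ≤ DtiltP μ p q αs - (α-αs)*(1-αs)*σs^2
        + (1/2)*(α-αs)^2*(σs^2 + 2*ρ0) := by
  intro α hα
  -- notation
  have hdom : Integrable (fun x => (p x + q x) * (1 + |LLR p q x|^3)) μ := by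
    have h1 : (fun x => (p x + q x) * (1 + |LLR p q x|^3))
        = fun x => p x + q x + (p x * |Real.log (p x / q x)|^3
            + q x * |Real.log (p x / q x)|^3) := by
      funext x; simp only [LLR]; ring
    have hip : Integrable p μ := by
      by_contra h
      rw [integral_undef h] at hpint
      norm_num at hpint
    have hiq : Integrable q μ := by
      by_contra h
      rw [integral_undef h] at hqint
      norm_num at hqint
    rw [h1]
    exact (hip.add hiq).add (hP3.add hQ3)
  -- positivity of Z on (0,1)
  have hhalf : (1/2 : ℝ) ∈ Set.Ioo (0:ℝ) 1 := by norm_num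
  have hZpos : ∀ a ∈ Set.Ioo (0:ℝ) 1, 0 < Zfun μ p q a := by
    by_contra h
    push_neg at h
    obtain ⟨b, hb, hZb⟩ := h
    have hZnn : 0 ≤ Zfun μ p q b := integral_nonneg fun x =>
      mul_nonneg (Real.rpow_nonneg (hp0 x) _) (Real.rpow_nonneg (hq0 x) _)
    have hZb0 : Zfun μ p q b = 0 := le_antisymm hZb hZnn
    have hZh : Zfun μ p q (1/2) = 0 := Z_zero_all hp hq hp0 hq0 hdom hb hZb0 hhalf
    have hqd : ∀ x, qdens μ p q (1/2 : ℝ) x = 0 := by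
      intro x
      rw [qdens_eq, hZh, div_zero]
    have hV0 : tiltVar μ p q (1/2) = 0 := by
      rw [tiltVar, tiltMean]
      simp_rw [hqd, zero_mul, integral_zero]
      norm_num
    have h2 : σ0sq ≤ tiltVar μ p q (1/2) := hσ0.1 ⟨1/2, hhalf, rfl⟩
    linarith
  -- basic bounds
  have hρ0nn : 0 ≤ ρ0 := by
    have h1 := hρ0.1 ⟨1/2, hhalf, rfl⟩
    exact (tiltM3abs_nonneg hp0 hq0 (1/2) (hZpos _ hhalf).le).trans h1
  have hσsnn : (0:ℝ) ≤ σs^2 := sq_nonneg σs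
  set C := σs^2 + 2*ρ0 with hC
  have hC0 : 0 ≤ C := by positivity
  -- derivative setup
  set Z0 : ℝ → ℝ := fun t => Zk μ p q 0 t with hZ0def
  set Z1 : ℝ → ℝ := fun t => Zk μ p q 1 t with hZ1def
  set Z2 : ℝ → ℝ := fun t => Zk μ p q 2 t with hZ2def
  set Z3 : ℝ → ℝ := fun t => Zk μ p q 3 t with hZ3def
  have hZ0pos : ∀ a ∈ Set.Ioo (0:ℝ) 1, 0 < Z0 a := by
    intro a ha
    have := hZpos a ha
    rw [Zfun_eq_Zk] at this
    exact this
  set F : ℝ → ℝ := fun t => -(1-t) * (Z1 t / Z0 t) - Real.log (Z0 t) with hF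
  set V : ℝ → ℝ := fun t => Z2 t / Z0 t - (Z1 t / Z0 t)^2 with hV
  set T : ℝ → ℝ := fun t => Z3 t / Z0 t - 3*(Z2 t / Z0 t)*(Z1 t / Z0 t)
      + 2*(Z1 t / Z0 t)^3 with hT
  set F' : ℝ → ℝ := fun t => -(1-t) * V t with hF'
  have hd0 : ∀ a ∈ Set.Ioo (0:ℝ) 1, HasDerivAt Z0 (Z1 a) a := fun a ha =>
    hasDerivAt_Zk hp hq hp0 hq0 hdom 0 (by norm_num) ha
  have hd1 : ∀ a ∈ Set.Ioo (0:ℝ) 1, HasDerivAt Z1 (Z2 a) a := fun a ha =>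
    hasDerivAt_Zk hp hq hp0 hq0 hdom 1 (by norm_num) ha
  have hd2 : ∀ a ∈ Set.Ioo (0:ℝ) 1, HasDerivAt Z2 (Z3 a) a := fun a ha =>
    hasDerivAt_Zk hp hq hp0 hq0 hdom 2 (by norm_num) ha
  have hdF : ∀ a ∈ Set.Ioo (0:ℝ) 1, HasDerivAt F (F' a) a := fun a ha =>
    hasDerivAt_Fabs (hd0 a ha) (hd1 a ha) (hZ0pos a ha)
  have hdV : ∀ a ∈ Set.Ioo (0:ℝ) 1, HasDerivAt V (T a) a := fun a ha =>
    hasDerivAt_Vabs (hd0 a ha) (hd1 a ha) (hd2 a ha) (hZ0pos a ha).ne'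
  have hdF' : ∀ a ∈ Set.Ioo (0:ℝ) 1, HasDerivAt F' (V a - (1-a) * T a) a := fun a ha =>
    hasDerivAt_F'abs (hd0 a ha) (hd1 a ha) (hd2 a ha) (hZ0pos a ha).ne'
  -- identification with tilt quantities
  have hVeq : ∀ a ∈ Set.Ioo (0:ℝ) 1, tiltVar μ p q a = V a := by
    intro a ha
    rw [tiltVar_eq hp hq hp0 hq0 hdom ha, Zfun_eq_Zk]
  have hTeq : ∀ a ∈ Set.Ioo (0:ℝ) 1, tiltM3 μ p q a = T a := by
    intro a ha
    rw [tiltM3_eq hp hq hp0 hq0 hdom ha (hZpos a ha), Zfun_eq_Zk]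
  have hFeq : ∀ a ∈ Set.Ioo (0:ℝ) 1, DtiltP μ p q a = F a := by
    intro a ha
    rw [DtiltP_eq hp hq hp0 hq0 hdom ha (hZpos a ha), Zfun_eq_Zk]
  -- interval
  have hsub : Set.Icc αs α ⊆ Set.Ioo (0:ℝ) 1 := by
    intro t ht
    exact ⟨lt_of_lt_of_le hαs.1 ht.1, lt_of_le_of_lt ht.2 hα.2⟩
  have hαsI : αs ∈ Set.Icc αs α := ⟨le_refl _, hα.1.le⟩
  have hTbd : ∀ a ∈ Set.Icc αs α, |T a| ≤ ρ0 := by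
    intro a ha
    rw [← hTeq a (hsub ha)]
    exact (abs_tiltM3_le hp0 hq0 a (hZpos a (hsub ha)).le).trans
      (hρ0.1 ⟨a, hsub ha, rfl⟩)
  have hVlb : ∀ a ∈ Set.Icc αs α, 0 ≤ V a := by
    intro a ha
    rw [← hVeq a (hsub ha)]
    exact le_trans hσ0pos.le (hσ0.1 ⟨a, hsub ha, rfl⟩)
  -- V is Lipschitz with constant ρ0 on the interval
  have hVub : ∀ a ∈ Set.Icc αs α, V a ≤ σs^2 + ρ0 := by
    intro a ha
    have hlip := Convex.norm_image_sub_le_of_norm_hasDerivWithin_le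
      (f := V) (f' := T) (s := Set.Icc αs α) (C := ρ0)
      (fun x hx => (hdV x (hsub hx)).hasDerivWithinAt)
      (fun x hx => by rw [Real.norm_eq_abs]; exact hTbd x hx)
      (convex_Icc _ _) hαsI ha
    rw [Real.norm_eq_abs, Real.norm_eq_abs] at hlip
    have h1 : V a - V αs ≤ ρ0 * |a - αs| := (le_abs_self _).trans hlip
    have h2 : |a - αs| ≤ 1 := by
      rw [abs_of_nonneg (by linarith [ha.1])]
      have := ha.2
      have := hα.2
      linarith [hαs.1]
    have h3 : ρ0 * |a - αs| ≤ ρ0 := by nlinarith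
    have hVαs : V αs = σs^2 := by
      rw [← hVeq αs (hsub hαsI), ← hσs]
    linarith
  -- bound on the second derivative of F
  have hF''bd : ∀ a ∈ Set.Icc αs α, |V a - (1-a) * T a| ≤ C := by
    intro a ha
    have h1a : 0 ≤ 1 - a := by linarith [(hsub ha).2]
    have h1a' : 1 - a ≤ 1 := by linarith [(hsub ha).1]
    have hT' := hTbd a ha
    have habs := abs_le.1 hT'
    rw [abs_le]
    constructor
    · nlinarith [hVlb a ha]
    · nlinarith [hVub a ha]
  -- F' is Lipschitz with constant C
  have hF'lip : ∀ a ∈ Set.Icc αs α, F' a - F' αs ≤ C * (a - αs) := by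
    intro a ha
    have hlip := Convex.norm_image_sub_le_of_norm_hasDerivWithin_le
      (f := F') (f' := fun t => V t - (1-t) * T t) (s := Set.Icc αs α) (C := C)
      (fun x hx => (hdF' x (hsub hx)).hasDerivWithinAt)
      (fun x hx => by rw [Real.norm_eq_abs]; exact hF''bd x hx)
      (convex_Icc _ _) hαsI ha
    rw [Real.norm_eq_abs, Real.norm_eq_abs, abs_of_nonneg (by linarith [ha.1] : (0:ℝ) ≤ a - αs)] at hlip
    exact (le_abs_self _).trans hlip
  -- the comparison function ψ
  set ψ : ℝ → ℝ := fun t => F t - F αs - F' αs * (t - αs) - C/2 * (t - αs)^2 with hψ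
  have hψd : ∀ x ∈ Set.Icc αs α, HasDerivAt ψ (F' x - F' αs - C * (x - αs)) x := by
    intro x hx
    have h1 := (hdF x (hsub hx)).sub (hasDerivAt_const x (F αs))
    have h2 : HasDerivAt (fun t : ℝ => F' αs * (t - αs)) (F' αs) x := by
      simpa using ((hasDerivAt_id x).sub (hasDerivAt_const x αs)).const_mul (F' αs)
    have h3 : HasDerivAt (fun t : ℝ => C/2 * (t - αs)^2) (C * (x - αs)) x := by
      have := (((hasDerivAt_id x).sub (hasDerivAt_const x αs)).pow 2).const_mul (C/2)
      refine this.congr_deriv ?_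
      simp only [Pi.sub_apply, id_eq]
      ring
    have := (h1.sub h2).sub h3
    refine this.congr_deriv ?_
    ring
  have hanti : AntitoneOn ψ (Set.Icc αs α) := by
    apply antitoneOn_of_deriv_nonpos (convex_Icc _ _)
    · intro x hx
      exact (hψd x hx).continuousAt.continuousWithinAt
    · intro x hx
      rw [interior_Icc] at hx
      exact ((hψd x (Set.mem_Icc_of_Ioo hx)).differentiableAt).differentiableWithinAt
    · intro x hx
      rw [interior_Icc] at hx
      rw [(hψd x (Set.mem_Icc_of_Ioo hx)).deriv]
      have := hF'lip x (Set.mem_Icc_of_Ioo hx)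
      linarith
  have hαI : α ∈ Set.Icc αs α := ⟨hα.1.le, le_refl _⟩
  have hψα : ψ α ≤ ψ αs := hanti hαsI hαI hα.1.le
  have hψαs : ψ αs = 0 := by
    rw [hψ]; simp
  rw [hψαs] at hψα
  -- unpack
  have hF'αs : F' αs = -(1-αs) * σs^2 := by
    show -(1-αs) * V αs = -(1-αs) * σs^2
    rw [← hVeq αs (hsub hαsI), ← hσs]
  have hgoal1 : F α ≤ F αs + F' αs * (α - αs) + C/2 * (α - αs)^2 := by
    have : ψ α = F α - F αs - F' αs * (α - αs) - C/2 * (α - αs)^2 := rfl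
    linarith [hψα, this ▸ hψα]
  rw [hFeq α (hsub hαI), hFeq αs (hsub hαsI)]
  rw [hF'αs] at hgoal1
  have : F αs - (α-αs)*(1-αs)*σs^2 + (1/2)*(α-αs)^2*(σs^2 + 2*ρ0)
      = F αs + (-(1-αs) * σs^2) * (α - αs) + C/2 * (α - αs)^2 := by
    rw [hC]; ring
  linarith
end
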